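/- arXiv:2009.07668 — 5 statements merged into one kernel-verified Lean document; each statement's English description precedes it below -/
import Mathlib

section
/- Let ρ_S and ρ_E be density matrices on finite-dimensional Hilbert spaces H_S and H_E, U a unitary on H_S ⊗ H_E, and ρ'_{SE} = U(ρ_S ⊗ ρ_E)U†, with marginals ρ'_S and ρ'_E. Then the entropy production Σ := I(S:E)_{ρ'_{SE}} + S(ρ'_E ‖ ρ_E) equals the relative entropy S(ρ'_{SE} ‖ ρ'_S ⊗ ρ_E). -/
open Matrix Kronecker BigOperators
open scoped ComplexOrder

noncomputable section

/-- Matrix logarithm of a Hermitian matrix, defined via the spectral decomposition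
(junk value `0` for non-Hermitian input). -/
def matLog {n : Type*} [Fintype n] [DecidableEq n] (A : Matrix n n ℂ) : Matrix n n ℂ :=
  if h : A.IsHermitian then
    (h.eigenvectorUnitary : Matrix n n ℂ) *
      Matrix.diagonal (fun i => (Real.log (h.eigenvalues i) : ℂ)) *
      (star (h.eigenvectorUnitary : Matrix n n ℂ))
  else 0

/-- Von Neumann entropy `S(ρ) = -Tr(ρ log ρ)`. -/
def vnEntropy {n : Type*} [Fintype n] [DecidableEq n] (ρ : Matrix n n ℂ) : ℝ :=
  (-(ρ * matLog ρ).trace).re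

/-- Quantum relative entropy `S(ρ‖σ) = Tr(ρ log ρ - ρ log σ)`. -/
def relEnt {n : Type*} [Fintype n] [DecidableEq n] (ρ σ : Matrix n n ℂ) : ℝ :=
  ((ρ * matLog ρ - ρ * matLog σ).trace).re

/-- Partial trace over the environment (second factor). -/
def ptrE {s e : Type*} [Fintype s] [Fintype e]
    (ρ : Matrix (s × e) (s × e) ℂ) : Matrix s s ℂ :=
  Matrix.of fun i j => ∑ k, ρ (i, k) (j, k)

/-- Partial trace over the system (first factor). -/
def ptrS {s e : Type*} [Fintype s] [Fintype e]
    (ρ : Matrix (s × e) (s × e) ℂ) : Matrix e e ℂ :=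
  Matrix.of fun i j => ∑ k, ρ (k, i) (k, j)

/-- Quantum mutual information `I(S:E)_ρ = S(ρ_S) + S(ρ_E) - S(ρ_SE)`. -/
def mutInfo {s e : Type*} [Fintype s] [DecidableEq s] [Fintype e] [DecidableEq e]
    (ρ : Matrix (s × e) (s × e) ℂ) : ℝ :=
  vnEntropy (ptrE ρ) + vnEntropy (ptrS ρ) - vnEntropy ρ

/-! ### Auxiliary lemmas -/

open Polynomial in
/-- Conjugation by a unitary as an ℝ-algebra homomorphism. -/
def unitaryConjAlgHom {n : Type*} [Fintype n] [DecidableEq n]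
    (V : Matrix n n ℂ) (hV : V ∈ Matrix.unitaryGroup n ℂ) :
    Matrix n n ℂ →ₐ[ℝ] Matrix n n ℂ where
  toFun x := V * x * Vᴴ
  map_one' := by
    show V * 1 * Vᴴ = 1
    rw [mul_one, ← Matrix.star_eq_conjTranspose]
    exact Matrix.mem_unitaryGroup_iff.mp hV
  map_mul' x y := by
    have h : Vᴴ * V = 1 := by
      rw [← Matrix.star_eq_conjTranspose]
      exact Matrix.mem_unitaryGroup_iff'.mp hV
    show V * (x * y) * Vᴴ = (V * x * Vᴴ) * (V * y * Vᴴ)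
    simp only [Matrix.mul_assoc]
    rw [← Matrix.mul_assoc Vᴴ V, h, one_mul]
  map_zero' := by
    show V * 0 * Vᴴ = 0
    simp
  map_add' x y := by
    show V * (x + y) * Vᴴ = V * x * Vᴴ + V * y * Vᴴ
    rw [Matrix.mul_add, Matrix.add_mul]
  commutes' r := by
    have h : V * Vᴴ = 1 := by
      rw [← Matrix.star_eq_conjTranspose]
      exact Matrix.mem_unitaryGroup_iff.mp hV
    show V * (algebraMap ℝ (Matrix n n ℂ) r) * Vᴴ = algebraMap ℝ (Matrix n n ℂ) r
    rw [Algebra.algebraMap_eq_smul_one, mul_smul_comm, smul_mul_assoc, mul_one, h]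

open Polynomial in
lemma aeval_unitary_conj {n : Type*} [Fintype n] [DecidableEq n]
    (V : Matrix n n ℂ) (hV : V ∈ Matrix.unitaryGroup n ℂ)
    (g : n → ℝ) (p : ℝ[X]) :
    aeval (V * Matrix.diagonal (fun i => (g i : ℂ)) * Vᴴ) p
      = V * Matrix.diagonal (fun i => ((p.eval (g i) : ℝ) : ℂ)) * Vᴴ := by
  have h1 : V * Matrix.diagonal (fun i => (g i : ℂ)) * Vᴴ
      = unitaryConjAlgHom V hV (Matrix.diagonalAlgHom (R := ℝ) (fun i => (g i : ℂ))) := rfl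
  rw [h1, aeval_algHom_apply, aeval_algHom_apply]
  have h2 : (aeval (fun i => (g i : ℂ)) p) = fun i => ((p.eval (g i) : ℝ) : ℂ) := by
    funext i
    have h4 : (aeval (fun i => (g i : ℂ)) p) i = aeval ((g i : ℂ)) p :=
      (aeval_algHom_apply (Pi.evalAlgHom ℝ (fun _ : n => ℂ) i) (fun i => (g i : ℂ)) p).symm
    rw [h4]
    have h3 : ((g i : ℂ)) = algebraMap ℝ ℂ (g i) := rfl
    rw [h3, aeval_algebraMap_apply_eq_algebraMap_eval]
    rfl
  rw [h2]
  rfl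

open Polynomial in
/-- Well-definedness of `matLog`: any unitary diagonalization computes it. -/
lemma matLog_eq_of_decomp {n : Type*} [Fintype n] [DecidableEq n]
    {A : Matrix n n ℂ} (hA : A.IsHermitian)
    {W : Matrix n n ℂ} (hW : W ∈ Matrix.unitaryGroup n ℂ)
    {d : n → ℝ} (hAd : A = W * Matrix.diagonal (fun i => (d i : ℂ)) * Wᴴ) :
    matLog A = W * Matrix.diagonal (fun i => (Real.log (d i) : ℂ)) * Wᴴ := by
  classical
  set t : Finset ℝ := (Finset.univ.image hA.eigenvalues) ∪ (Finset.univ.image d) with ht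
  set p : ℝ[X] := Lagrange.interpolate t id Real.log with hp
  have hpev : ∀ x ∈ t, p.eval x = Real.log x := by
    intro x hx
    have := Lagrange.eval_interpolate_at_node (v := id) (r := Real.log) (s := t)
      (Set.injOn_id _) hx
    exact this
  have h1 : aeval A p = W * Matrix.diagonal (fun i => (Real.log (d i) : ℂ)) * Wᴴ := by
    rw [hAd, aeval_unitary_conj W hW d p]
    have he : (fun i => ((p.eval (d i) : ℝ) : ℂ)) = (fun i => ((Real.log (d i) : ℝ) : ℂ)) := by
      funext i; rw [hpev (d i) (by simp [ht])]
    rw [he]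
  have h2 : aeval A p = matLog A := by
    rw [matLog, dif_pos hA]
    have hsp : A = (hA.eigenvectorUnitary : Matrix n n ℂ) *
        Matrix.diagonal (fun i => (hA.eigenvalues i : ℂ)) *
        ((hA.eigenvectorUnitary : Matrix n n ℂ))ᴴ := by
      conv_lhs => rw [hA.spectral_theorem]
      rfl
    conv_lhs => rw [hsp]
    rw [aeval_unitary_conj _ (hA.eigenvectorUnitary).2 hA.eigenvalues p]
    rw [Matrix.star_eq_conjTranspose]
    have he : (fun i => ((p.eval (hA.eigenvalues i) : ℝ) : ℂ))
        = (fun i => ((Real.log (hA.eigenvalues i) : ℝ) : ℂ)) := by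
      funext i; rw [hpev (hA.eigenvalues i) (by simp [ht])]
    rw [he]
  rw [← h2, h1]

lemma kron_conjTranspose {m n : Type*} (A : Matrix m m ℂ) (B : Matrix n n ℂ) :
    (A ⊗ₖ B)ᴴ = Aᴴ ⊗ₖ Bᴴ := by
  ext ⟨i, j⟩ ⟨k, l⟩
  simp [Matrix.conjTranspose_apply, star_mul']

lemma kron_unitary {m n : Type*} [Fintype m] [DecidableEq m] [Fintype n] [DecidableEq n]
    {V : Matrix m m ℂ} (hV : V ∈ Matrix.unitaryGroup m ℂ)
    {W : Matrix n n ℂ} (hW : W ∈ Matrix.unitaryGroup n ℂ) :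
    V ⊗ₖ W ∈ Matrix.unitaryGroup (m × n) ℂ := by
  rw [Matrix.mem_unitaryGroup_iff, Matrix.star_eq_conjTranspose, kron_conjTranspose,
    ← Matrix.mul_kronecker_mul, ← Matrix.star_eq_conjTranspose, ← Matrix.star_eq_conjTranspose,
    Matrix.mem_unitaryGroup_iff.mp hV, Matrix.mem_unitaryGroup_iff.mp hW,
    Matrix.one_kronecker_one]

lemma kron_decomp {m n : Type*} [Fintype m] [DecidableEq m] [Fintype n] [DecidableEq n]
    {A : Matrix m m ℂ} (hA : A.PosDef) {B : Matrix n n ℂ} (hB : B.PosDef) :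
    A ⊗ₖ B = ((hA.1.eigenvectorUnitary : Matrix m m ℂ) ⊗ₖ (hB.1.eigenvectorUnitary : Matrix n n ℂ)) *
      Matrix.diagonal (fun p : m × n => ((hA.1.eigenvalues p.1 * hB.1.eigenvalues p.2 : ℝ) : ℂ))
      * ((hA.1.eigenvectorUnitary : Matrix m m ℂ) ⊗ₖ (hB.1.eigenvectorUnitary : Matrix n n ℂ))ᴴ := by
  have hAsp : A = (hA.1.eigenvectorUnitary : Matrix m m ℂ) *
      Matrix.diagonal (fun i => (hA.1.eigenvalues i : ℂ)) * (hA.1.eigenvectorUnitary : Matrix m m ℂ)ᴴ := by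
    conv_lhs => rw [hA.1.spectral_theorem]
    rfl
  have hBsp : B = (hB.1.eigenvectorUnitary : Matrix n n ℂ) *
      Matrix.diagonal (fun i => (hB.1.eigenvalues i : ℂ)) * (hB.1.eigenvectorUnitary : Matrix n n ℂ)ᴴ := by
    conv_lhs => rw [hB.1.spectral_theorem]
    rfl
  conv_lhs => rw [hAsp, hBsp]
  rw [Matrix.mul_kronecker_mul, Matrix.mul_kronecker_mul,
    Matrix.diagonal_kronecker_diagonal, ← kron_conjTranspose]
  congr 2
  funext p
  push_cast
  rfl

lemma matLog_kron {m n : Type*} [Fintype m] [DecidableEq m] [Fintype n] [DecidableEq n]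
    {A : Matrix m m ℂ} (hA : A.PosDef) {B : Matrix n n ℂ} (hB : B.PosDef) :
    matLog (A ⊗ₖ B) = matLog A ⊗ₖ (1 : Matrix n n ℂ) + (1 : Matrix m m ℂ) ⊗ₖ matLog B := by
  classical
  set V : Matrix m m ℂ := (hA.1.eigenvectorUnitary : Matrix m m ℂ) with hVdef
  set W : Matrix n n ℂ := (hB.1.eigenvectorUnitary : Matrix n n ℂ) with hWdef
  have hV : V ∈ Matrix.unitaryGroup m ℂ := (hA.1.eigenvectorUnitary).2
  have hW : W ∈ Matrix.unitaryGroup n ℂ := (hB.1.eigenvectorUnitary).2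
  have hWW : W * Wᴴ = 1 := by
    rw [← Matrix.star_eq_conjTranspose]; exact Matrix.mem_unitaryGroup_iff.mp hW
  have hVV : V * Vᴴ = 1 := by
    rw [← Matrix.star_eq_conjTranspose]; exact Matrix.mem_unitaryGroup_iff.mp hV
  have hherm : (A ⊗ₖ B).IsHermitian := by
    rw [Matrix.IsHermitian, kron_conjTranspose, hA.1.eq, hB.1.eq]
  have hdec := kron_decomp hA hB
  have hlog := matLog_eq_of_decomp hherm (kron_unitary hV hW) hdec
  have hlogsum : (fun p : m × n => (Real.log (hA.1.eigenvalues p.1 * hB.1.eigenvalues p.2) : ℂ))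
      = fun p : m × n => (Real.log (hA.1.eigenvalues p.1) : ℂ) + (Real.log (hB.1.eigenvalues p.2) : ℂ) := by
    funext p
    rw [Real.log_mul (hA.eigenvalues_pos p.1).ne' (hB.eigenvalues_pos p.2).ne']
    push_cast
    ring
  rw [hlogsum] at hlog
  have hdiag : Matrix.diagonal (fun p : m × n => (Real.log (hA.1.eigenvalues p.1) : ℂ)
        + (Real.log (hB.1.eigenvalues p.2) : ℂ))
      = (Matrix.diagonal (fun i => (Real.log (hA.1.eigenvalues i) : ℂ)) ⊗ₖ (1 : Matrix n n ℂ))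
        + ((1 : Matrix m m ℂ) ⊗ₖ Matrix.diagonal (fun j => (Real.log (hB.1.eigenvalues j) : ℂ))) := by
    rw [← Matrix.diagonal_one, ← Matrix.diagonal_one, Matrix.diagonal_kronecker_diagonal,
      Matrix.diagonal_kronecker_diagonal]
    simp only [mul_one, one_mul]
    rw [Matrix.diagonal_add]
  rw [hdiag] at hlog
  rw [hlog, Matrix.mul_add, Matrix.add_mul, kron_conjTranspose,
    ← Matrix.mul_kronecker_mul, ← Matrix.mul_kronecker_mul,
    ← Matrix.mul_kronecker_mul, ← Matrix.mul_kronecker_mul]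
  have hVVone : V * (1 : Matrix m m ℂ) * Vᴴ = 1 := by rw [mul_one, hVV]
  have hWWone : W * (1 : Matrix n n ℂ) * Wᴴ = 1 := by rw [mul_one, hWW]
  have hmlA : matLog A = V * Matrix.diagonal (fun i => (Real.log (hA.1.eigenvalues i) : ℂ)) * Vᴴ := by
    rw [matLog, dif_pos hA.1, Matrix.star_eq_conjTranspose]
  have hmlB : matLog B = W * Matrix.diagonal (fun j => (Real.log (hB.1.eigenvalues j) : ℂ)) * Wᴴ := by
    rw [matLog, dif_pos hB.1, Matrix.star_eq_conjTranspose]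
  rw [hVVone, hWWone, ← hmlA, ← hmlB]

lemma trace_mul_kron_one {s e : Type*} [Fintype s] [DecidableEq s] [Fintype e] [DecidableEq e]
    (ρ : Matrix (s × e) (s × e) ℂ) (X : Matrix s s ℂ) :
    (ρ * (X ⊗ₖ (1 : Matrix e e ℂ))).trace = (ptrE ρ * X).trace := by
  simp only [Matrix.trace, Matrix.diag_apply, Matrix.mul_apply, ptrE, Matrix.of_apply,
    Matrix.kroneckerMap_apply, Matrix.one_apply, Fintype.sum_prod_type, mul_ite, mul_one,
    mul_zero, ite_mul, zero_mul, Finset.sum_ite_eq', Finset.mem_univ, if_true, Finset.sum_mul]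
  refine Finset.sum_congr rfl fun i _ => Finset.sum_comm

lemma trace_mul_one_kron {s e : Type*} [Fintype s] [DecidableEq s] [Fintype e] [DecidableEq e]
    (ρ : Matrix (s × e) (s × e) ℂ) (Y : Matrix e e ℂ) :
    (ρ * ((1 : Matrix s s ℂ) ⊗ₖ Y)).trace = (ptrS ρ * Y).trace := by
  simp only [Matrix.trace, Matrix.diag_apply, Matrix.mul_apply, ptrS, Matrix.of_apply,
    Matrix.kroneckerMap_apply, Matrix.one_apply, Fintype.sum_prod_type, mul_ite, mul_one,
    mul_zero, ite_mul, zero_mul, Finset.mem_univ, if_true, one_mul, Finset.sum_mul]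
  have inner : ∀ (i : s) (k : e),
      (∑ j : s, ∑ l : e, if j = i then ρ (i, k) (j, l) * Y l k else 0)
        = ∑ l : e, ρ (i, k) (i, l) * Y l k := by
    intro i k
    rw [Finset.sum_comm]
    simp [Finset.sum_ite_eq']
  calc (∑ i : s, ∑ k : e, ∑ j : s, ∑ l : e, if j = i then ρ (i, k) (j, l) * Y l k else 0)
      = ∑ i : s, ∑ k : e, ∑ l : e, ρ (i, k) (i, l) * Y l k := by
        exact Finset.sum_congr rfl fun i _ => Finset.sum_congr rfl fun k _ => inner i k
    _ = ∑ k : e, ∑ i : s, ∑ l : e, ρ (i, k) (i, l) * Y l k := Finset.sum_comm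
    _ = ∑ k : e, ∑ l : e, ∑ i : s, ρ (i, k) (i, l) * Y l k :=
        Finset.sum_congr rfl fun k _ => Finset.sum_comm

lemma ptrE_isHermitian {s e : Type*} [Fintype s] [Fintype e]
    {ρ : Matrix (s × e) (s × e) ℂ} (hρ : ρ.IsHermitian) : (ptrE ρ).IsHermitian := by
  ext i j
  simp only [Matrix.conjTranspose_apply, ptrE, Matrix.of_apply, star_sum]
  exact Finset.sum_congr rfl fun k _ => hρ.apply (i, k) (j, k)

lemma posDef_unitary_conj {n : Type*} [Fintype n] [DecidableEq n]
    {M : Matrix n n ℂ} (hM : M.PosDef) {V : Matrix n n ℂ}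
    (hV : V ∈ Matrix.unitaryGroup n ℂ) : (V * M * Vᴴ).PosDef := by
  have hVV : V * Vᴴ = 1 := by
    rw [← Matrix.star_eq_conjTranspose]; exact Matrix.mem_unitaryGroup_iff.mp hV
  rw [Matrix.posDef_iff_dotProduct_mulVec]
  constructor
  · rw [Matrix.IsHermitian, Matrix.conjTranspose_mul, Matrix.conjTranspose_mul,
      Matrix.conjTranspose_conjTranspose, hM.1.eq, Matrix.mul_assoc]
  · intro x hx
    set y : n → ℂ := Vᴴ *ᵥ x with hy
    have hyne : y ≠ 0 := by
      intro h
      apply hx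
      have h2 : V *ᵥ y = x := by
        rw [hy, Matrix.mulVec_mulVec, hVV, Matrix.one_mulVec]
      rw [h, Matrix.mulVec_zero] at h2
      exact h2.symm
    have heq : star x ⬝ᵥ ((V * M * Vᴴ) *ᵥ x) = star y ⬝ᵥ (M *ᵥ y) := by
      rw [hy, Matrix.star_mulVec, ← Matrix.mulVec_mulVec, ← Matrix.mulVec_mulVec,
        Matrix.dotProduct_mulVec (star x), Matrix.conjTranspose_conjTranspose]
    rw [heq]
    exact hM.dotProduct_mulVec_pos hyne

lemma posDef_kron {m n : Type*} [Fintype m] [DecidableEq m] [Fintype n] [DecidableEq n]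
    {A : Matrix m m ℂ} (hA : A.PosDef) {B : Matrix n n ℂ} (hB : B.PosDef) :
    (A ⊗ₖ B).PosDef := by
  rw [kron_decomp hA hB]
  refine posDef_unitary_conj (Matrix.posDef_diagonal_iff.mpr fun p => ?_)
    (kron_unitary (hA.1.eigenvectorUnitary).2 (hB.1.eigenvectorUnitary).2)
  have : (0 : ℝ) < hA.1.eigenvalues p.1 * hB.1.eigenvalues p.2 :=
    mul_pos (hA.eigenvalues_pos p.1) (hB.eigenvalues_pos p.2)
  exact_mod_cast this

lemma ptrE_posDef {s e : Type*} [Fintype s] [Fintype e] [Nonempty e]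
    {ρ : Matrix (s × e) (s × e) ℂ} (hρ : ρ.PosDef) : (ptrE ρ).PosDef := by
  refine Matrix.PosDef.of_dotProduct_mulVec_pos (ptrE_isHermitian hρ.1) fun x hx => ?_
  classical
  set v : e → ((s × e) → ℂ) := fun k p => if p.2 = k then x p.1 else 0 with hv
  have hR : ∀ k, star (v k) ⬝ᵥ (ρ *ᵥ v k) = ∑ i, ∑ j, star (x i) * (ρ (i, k) (j, k) * x j) := by
    intro k
    simp only [dotProduct, Matrix.mulVec, hv, Fintype.sum_prod_type, Pi.star_apply,
      apply_ite (star (R := ℂ)), star_zero, mul_ite, mul_zero, ite_mul, zero_mul,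
      Finset.sum_ite_eq', Finset.mem_univ, if_true]
    simp [Finset.mul_sum]
  have hswap : (∑ k, ∑ i, ∑ j, star (x i) * (ρ (i, k) (j, k) * x j))
      = ∑ i, ∑ j, ∑ k, star (x i) * (ρ (i, k) (j, k) * x j) := by
    rw [Finset.sum_comm]
    exact Finset.sum_congr rfl fun i _ => Finset.sum_comm
  have hsum : star x ⬝ᵥ (ptrE ρ *ᵥ x) = ∑ k, star (v k) ⬝ᵥ (ρ *ᵥ v k) := by
    simp only [hR]
    rw [hswap]
    simp only [dotProduct, Matrix.mulVec, ptrE, Matrix.of_apply, Pi.star_apply,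
      Finset.mul_sum, Finset.sum_mul]
  rw [hsum]
  obtain ⟨i0, hi0⟩ : ∃ i, x i ≠ 0 := Function.ne_iff.mp hx
  have k0 : e := Classical.arbitrary e
  refine Finset.sum_pos' (fun k _ => hρ.posSemidef.dotProduct_mulVec_nonneg (v k)) ⟨k0, Finset.mem_univ k0, ?_⟩
  refine hρ.dotProduct_mulVec_pos (x := v k0) ?_
  intro h
  apply hi0
  have h2 := congr_fun h (i0, k0)
  simpa [hv] using h2

/-- For density matrices `ρS`, `ρE` (full rank so that all relative
entropies are finite) and a unitary `U`, with `ρ' = U (ρS ⊗ ρE) U†`, the entropy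
production `Σ = I(S:E)_{ρ'} + S(ρ'_E ‖ ρE)` equals `S(ρ' ‖ ρ'_S ⊗ ρE)`. -/
theorem entropy_production_eq_relEnt
    {s e : Type*} [Fintype s] [DecidableEq s] [Fintype e] [DecidableEq e]
    (ρS : Matrix s s ℂ) (ρE : Matrix e e ℂ) (U : Matrix (s × e) (s × e) ℂ)
    (hρS : ρS.PosDef) (hρStr : ρS.trace = 1)
    (hρE : ρE.PosDef) (hρEtr : ρE.trace = 1)
    (hU : U ∈ Matrix.unitaryGroup (s × e) ℂ)
    (ρ' : Matrix (s × e) (s × e) ℂ) (hρ' : ρ' = U * (ρS ⊗ₖ ρE) * Uᴴ) :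
    mutInfo ρ' + relEnt (ptrS ρ') ρE = relEnt ρ' ((ptrE ρ') ⊗ₖ ρE) := by
  haveI : Nonempty e := by
    by_contra h
    rw [not_nonempty_iff] at h
    rw [Matrix.trace, Finset.univ_eq_empty, Finset.sum_empty] at hρEtr
    exact zero_ne_one hρEtr
  have hρ'PD : ρ'.PosDef := by
    rw [hρ']
    exact posDef_unitary_conj (posDef_kron hρS hρE) hU
  have hAPD : (ptrE ρ').PosDef := ptrE_posDef hρ'PD
  have hkey : matLog ((ptrE ρ') ⊗ₖ ρE)
      = matLog (ptrE ρ') ⊗ₖ (1 : Matrix e e ℂ) + (1 : Matrix s s ℂ) ⊗ₖ matLog ρE :=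
    matLog_kron hAPD hρE
  have h1 : (ρ' * (matLog (ptrE ρ') ⊗ₖ (1 : Matrix e e ℂ))).trace
      = (ptrE ρ' * matLog (ptrE ρ')).trace := trace_mul_kron_one ρ' _
  have h2 : (ρ' * ((1 : Matrix s s ℂ) ⊗ₖ matLog ρE)).trace
      = (ptrS ρ' * matLog ρE).trace := trace_mul_one_kron ρ' _
  simp only [mutInfo, relEnt, vnEntropy]
  rw [hkey, Matrix.mul_add, Matrix.trace_sub, Matrix.trace_sub, Matrix.trace_add, h1, h2]
  simp only [Complex.sub_re, Complex.add_re, Complex.neg_re]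
  ring

end
end

section
/- Suppose the global unitary map has a fixed point: U(ρ*_S ⊗ ρ_E)U† = ρ*_S ⊗ ρ_E for some density matrix ρ*_S. Then the entropy flux Φ := Tr_E{(ρ_E − ρ'_E) log ρ_E} satisfies Φ = Tr_S{(ρ'_S − ρ_S) log ρ*_S}, i.e., the flux can be expressed solely in terms of system quantities. -/
open Matrix Kronecker BigOperators
open scoped ComplexOrder

noncomputable section

/-! ### Auxiliary lemmas -/

open Polynomial in
lemma matLog.aux_aeval_diagonal {n : Type*} [Fintype n] [DecidableEq n]
    (d : n → ℂ) (p : ℝ[X]) :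
    (aeval (Matrix.diagonal d)) p = Matrix.diagonal (fun i => (aeval (d i)) p) := by
  induction p using Polynomial.induction_on' with
  | add f g hf hg => simp [hf, hg, Matrix.diagonal_add]
  | monomial k a =>
      simp [aeval_monomial, Matrix.algebraMap_eq_diagonal, Matrix.diagonal_pow,
        Matrix.diagonal_mul_diagonal]

lemma matLog.aux_conj_pow {n : Type*} [Fintype n] [DecidableEq n] (W D : Matrix n n ℂ)
    (h1 : W * Wᴴ = 1) (h2 : Wᴴ * W = 1) (k : ℕ) :
    (W * D * Wᴴ) ^ k = W * D ^ k * Wᴴ := by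
  induction k with
  | zero => simp [h1]
  | succ m ih =>
      rw [pow_succ, pow_succ, ih]
      calc W * D ^ m * Wᴴ * (W * D * Wᴴ) = W * D ^ m * (Wᴴ * W) * D * Wᴴ := by
            simp only [Matrix.mul_assoc]
        _ = W * (D ^ m * D) * Wᴴ := by rw [h2]; simp only [Matrix.mul_assoc, Matrix.mul_one]
        _ = _ := by simp [Matrix.mul_assoc]

open Polynomial in
lemma matLog.aux_aeval_conj {n : Type*} [Fintype n] [DecidableEq n] (W D : Matrix n n ℂ)
    (h1 : W * Wᴴ = 1) (h2 : Wᴴ * W = 1) (p : ℝ[X]) :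
    (aeval (W * D * Wᴴ)) p = W * (aeval D) p * Wᴴ := by
  induction p using Polynomial.induction_on' with
  | add f g hf hg => simp [hf, hg, Matrix.mul_add, Matrix.add_mul]
  | monomial k a =>
      rw [aeval_monomial, aeval_monomial, matLog.aux_conj_pow W D h1 h2, ← Algebra.smul_def,
        ← Algebra.smul_def, Matrix.mul_smul, Matrix.smul_mul]

open Polynomial in
lemma matLog.aux_commute_aeval {n : Type*} [Fintype n] [DecidableEq n] (U A : Matrix n n ℂ)
    (h : Commute U A) (p : ℝ[X]) :
    Commute U ((aeval A) p) := by
  induction p using Polynomial.induction_on' with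
  | add f g hf hg => simpa using hf.add_right hg
  | monomial k a =>
      rw [aeval_monomial, ← Algebra.smul_def]
      exact ((h.pow_right k).smul_right a)

lemma matLog.aux_kron_conjTranspose {n m : Type*} [Fintype n] [Fintype m]
    (A : Matrix n n ℂ) (B : Matrix m m ℂ) :
    (A ⊗ₖ B)ᴴ = Aᴴ ⊗ₖ Bᴴ := by
  ext ⟨i, j⟩ ⟨k, l⟩
  simp [Matrix.conjTranspose_apply, Matrix.kroneckerMap_apply, mul_comm]

lemma matLog.aux_trace_ptrS_mul {s e : Type*} [Fintype s] [DecidableEq s] [Fintype e]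
    [DecidableEq e] (ρ : Matrix (s × e) (s × e) ℂ) (M : Matrix e e ℂ) :
    (ptrS ρ * M).trace = (ρ * ((1 : Matrix s s ℂ) ⊗ₖ M)).trace := by
  simp only [ptrS, Matrix.trace, Matrix.diag_apply, Matrix.mul_apply, Matrix.of_apply,
    Matrix.kroneckerMap_apply, Matrix.one_apply, Fintype.sum_prod_type, Finset.sum_mul,
    mul_ite, mul_one, mul_zero, ite_mul, zero_mul]
  have hR : ∀ (k : s) (x : e), (∑ l, ∑ y, if l = k then ρ (k, x) (l, y) * (1 * M y x) else 0)
      = ∑ y, ρ (k, x) (k, y) * M y x := by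
    intro k x
    rw [Finset.sum_comm]
    simp [Finset.sum_ite_eq']
  simp only [hR]
  have hswap : ∀ x : e, (∑ y : e, ∑ k : s, ρ (k, x) (k, y) * M y x)
      = ∑ k : s, ∑ y : e, ρ (k, x) (k, y) * M y x := fun x => Finset.sum_comm
  simp only [hswap]
  exact Finset.sum_comm

lemma matLog.aux_trace_ptrE_mul {s e : Type*} [Fintype s] [DecidableEq s] [Fintype e]
    [DecidableEq e] (ρ : Matrix (s × e) (s × e) ℂ) (M : Matrix s s ℂ) :
    (ptrE ρ * M).trace = (ρ * (M ⊗ₖ (1 : Matrix e e ℂ))).trace := by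
  simp only [ptrE, Matrix.trace, Matrix.diag_apply, Matrix.mul_apply, Matrix.of_apply,
    Matrix.kroneckerMap_apply, Matrix.one_apply, Fintype.sum_prod_type, Finset.sum_mul,
    mul_ite, mul_one, mul_zero, ite_mul, zero_mul]
  have hR : ∀ (x : s) (k : e), (∑ l : s, ∑ y : e, if y = k then ρ (x, k) (l, y) * M l x else 0)
      = ∑ l : s, ρ (x, k) (l, k) * M l x := by
    intro x k
    simp [Finset.sum_ite_eq']
  simp only [hR]
  refine Finset.sum_congr rfl fun x _ => Finset.sum_comm

set_option maxHeartbeats 1000000 in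
/-- If the global unitary has a fixed point,
`U (ρ*_S ⊗ ρE) U† = ρ*_S ⊗ ρE`, then the entropy flux
`Φ = Tr_E{(ρE - ρ'_E) log ρE}` can be expressed solely in terms of system quantities:
`Φ = Tr_S{(ρ'_S - ρS) log ρ*_S}`. -/
theorem entropy_flux_fixed_point
    {s e : Type*} [Fintype s] [DecidableEq s] [Fintype e] [DecidableEq e]
    (ρS ρStar : Matrix s s ℂ) (ρE : Matrix e e ℂ) (U : Matrix (s × e) (s × e) ℂ)
    (hρS : ρS.PosSemidef) (hρStr : ρS.trace = 1)
    (hρStar : ρStar.PosDef) (hρStarTr : ρStar.trace = 1)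
    (hρE : ρE.PosDef) (hρEtr : ρE.trace = 1)
    (hU : U ∈ Matrix.unitaryGroup (s × e) ℂ)
    (hfix : U * (ρStar ⊗ₖ ρE) * Uᴴ = ρStar ⊗ₖ ρE)
    (ρ' : Matrix (s × e) (s × e) ℂ) (hρ' : ρ' = U * (ρS ⊗ₖ ρE) * Uᴴ) :
    (((ρE - ptrS ρ') * matLog ρE).trace).re
      = (((ptrE ρ' - ρS) * matLog ρStar).trace).re := by
  classical
  have hSh : ρStar.IsHermitian := hρStar.1
  have hEh : ρE.IsHermitian := hρE.1
  set VS : Matrix s s ℂ := (hSh.eigenvectorUnitary : Matrix s s ℂ) with hVS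
  set VE : Matrix e e ℂ := (hEh.eigenvectorUnitary : Matrix e e ℂ) with hVE
  have hVS1 : VS * VSᴴ = 1 := by
    rw [← Matrix.star_eq_conjTranspose]
    exact (Matrix.mem_unitaryGroup_iff).mp hSh.eigenvectorUnitary.2
  have hVS2 : VSᴴ * VS = 1 := by
    rw [← Matrix.star_eq_conjTranspose]
    exact (Matrix.mem_unitaryGroup_iff').mp hSh.eigenvectorUnitary.2
  have hVE1 : VE * VEᴴ = 1 := by
    rw [← Matrix.star_eq_conjTranspose]
    exact (Matrix.mem_unitaryGroup_iff).mp hEh.eigenvectorUnitary.2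
  have hVE2 : VEᴴ * VE = 1 := by
    rw [← Matrix.star_eq_conjTranspose]
    exact (Matrix.mem_unitaryGroup_iff').mp hEh.eigenvectorUnitary.2
  set W : Matrix (s × e) (s × e) ℂ := VS ⊗ₖ VE with hWdef
  have hW1 : W * Wᴴ = 1 := by
    rw [hWdef, matLog.aux_kron_conjTranspose, ← Matrix.mul_kronecker_mul, hVS1, hVE1,
      Matrix.one_kronecker_one]
  have hW2 : Wᴴ * W = 1 := by
    rw [hWdef, matLog.aux_kron_conjTranspose, ← Matrix.mul_kronecker_mul, hVS2, hVE2,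
      Matrix.one_kronecker_one]
  -- spectral decompositions
  have hA : ρStar ⊗ₖ ρE
      = W * Matrix.diagonal
          (fun p : s × e => ((hSh.eigenvalues p.1 * hEh.eigenvalues p.2 : ℝ) : ℂ)) * Wᴴ := by
    conv_lhs => rw [hSh.spectral_theorem, hEh.spectral_theorem]
    rw [Unitary.conjStarAlgAut_apply, Unitary.conjStarAlgAut_apply]
    rw [Matrix.star_eq_conjTranspose, Matrix.star_eq_conjTranspose,
      Matrix.mul_kronecker_mul, Matrix.mul_kronecker_mul,
      ← matLog.aux_kron_conjTranspose, Matrix.diagonal_kronecker_diagonal]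
    congr 2
    ext p
    push_cast
    rfl
  set LS : Matrix s s ℂ := matLog ρStar with hLSdef
  set LE : Matrix e e ℂ := matLog ρE with hLEdef
  have hLS : LS = VS * Matrix.diagonal (fun i => ((Real.log (hSh.eigenvalues i) : ℝ) : ℂ)) * VSᴴ := by
    rw [hLSdef, matLog, dif_pos hSh, Matrix.star_eq_conjTranspose]
  have hLE : LE = VE * Matrix.diagonal (fun i => ((Real.log (hEh.eigenvalues i) : ℝ) : ℂ)) * VEᴴ := by
    rw [hLEdef, matLog, dif_pos hEh, Matrix.star_eq_conjTranspose]
  set L : Matrix (s × e) (s × e) ℂ := LS ⊗ₖ (1 : Matrix e e ℂ) + (1 : Matrix s s ℂ) ⊗ₖ LE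
    with hLdef
  have hL : L = W * Matrix.diagonal
      (fun p : s × e =>
        ((Real.log (hSh.eigenvalues p.1) + Real.log (hEh.eigenvalues p.2) : ℝ) : ℂ)) * Wᴴ := by
    have h1 : (1 : Matrix e e ℂ) = VE * (1 : Matrix e e ℂ) * VEᴴ := by rw [Matrix.mul_one, hVE1]
    have h2 : (1 : Matrix s s ℂ) = VS * (1 : Matrix s s ℂ) * VSᴴ := by rw [Matrix.mul_one, hVS1]
    rw [hLdef, hLS, hLE]
    conv_lhs => rw [h1, h2]
    rw [Matrix.mul_kronecker_mul, Matrix.mul_kronecker_mul,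
      Matrix.mul_kronecker_mul, Matrix.mul_kronecker_mul]
    have hone_e : (1 : Matrix e e ℂ) = Matrix.diagonal (fun _ => (1 : ℂ)) := by
      rw [Matrix.diagonal_one]
    have hone_s : (1 : Matrix s s ℂ) = Matrix.diagonal (fun _ => (1 : ℂ)) := by
      rw [Matrix.diagonal_one]
    rw [hone_e, hone_s, Matrix.diagonal_kronecker_diagonal, Matrix.diagonal_kronecker_diagonal,
      ← Matrix.add_mul, ← Matrix.mul_add, Matrix.diagonal_add, ← matLog.aux_kron_conjTranspose]
    congr 2
    ext p
    push_cast
    ring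
  -- the polynomial
  set T : Finset ℝ :=
    Finset.image (fun p : s × e => hSh.eigenvalues p.1 * hEh.eigenvalues p.2) Finset.univ with hT
  set P : Polynomial ℝ := Lagrange.interpolate T id Real.log with hP
  have heval : ∀ p : s × e,
      P.eval (hSh.eigenvalues p.1 * hEh.eigenvalues p.2)
        = Real.log (hSh.eigenvalues p.1 * hEh.eigenvalues p.2) := by
    intro p
    have hmem : hSh.eigenvalues p.1 * hEh.eigenvalues p.2 ∈ T :=
      Finset.mem_image_of_mem _ (Finset.mem_univ p)
    exact Lagrange.eval_interpolate_at_node (v := id)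
      (i := hSh.eigenvalues p.1 * hEh.eigenvalues p.2) Real.log (Set.injOn_id _) hmem
  have hPA : (Polynomial.aeval (ρStar ⊗ₖ ρE)) P = L := by
    rw [hA, matLog.aux_aeval_conj W _ hW1 hW2, matLog.aux_aeval_diagonal, hL]
    congr 2
    refine congrArg Matrix.diagonal (funext fun p => ?_)
    rw [← Complex.coe_algebraMap, Polynomial.aeval_algebraMap_apply_eq_algebraMap_eval,
      Complex.coe_algebraMap, heval p,
      Real.log_mul (hρStar.eigenvalues_pos p.1).ne' (hρE.eigenvalues_pos p.2).ne']
  -- commutation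
  have hUU : Uᴴ * U = 1 := by
    rw [← Matrix.star_eq_conjTranspose]
    exact (Matrix.mem_unitaryGroup_iff').mp hU
  have hcomm : Commute U (ρStar ⊗ₖ ρE) := by
    have := congrArg (fun X => X * U) hfix
    simp only [Matrix.mul_assoc] at this
    rw [hUU, Matrix.mul_one] at this
    exact this
  have hUL : Commute U L := by
    rw [← hPA]
    exact matLog.aux_commute_aeval U _ hcomm P
  -- trace identity
  have key : (ρ' * L).trace = ((ρS ⊗ₖ ρE) * L).trace := by
    rw [hρ']
    have h1 : U * (ρS ⊗ₖ ρE) * Uᴴ * L = U * ((ρS ⊗ₖ ρE) * (Uᴴ * L)) := by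
      simp only [Matrix.mul_assoc]
    rw [h1, Matrix.trace_mul_comm U, Matrix.mul_assoc, Matrix.mul_assoc]
    have h2 : Uᴴ * (L * U) = L := by
      rw [← hUL.eq, ← Matrix.mul_assoc, hUU, Matrix.one_mul]
    rw [h2]
  -- expand both sides of key
  have expand1 : (ρ' * L).trace = (ptrE ρ' * LS).trace + (ptrS ρ' * LE).trace := by
    rw [hLdef, Matrix.mul_add, Matrix.trace_add, matLog.aux_trace_ptrE_mul,
      matLog.aux_trace_ptrS_mul]
  have expand2 : ((ρS ⊗ₖ ρE) * L).trace = (ρS * LS).trace + (ρE * LE).trace := by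
    rw [hLdef, Matrix.mul_add, Matrix.trace_add, ← Matrix.mul_kronecker_mul,
      ← Matrix.mul_kronecker_mul, Matrix.trace_kronecker, Matrix.trace_kronecker]
    simp [Matrix.trace_kronecker, hρEtr, hρStr]
  have main : ((ρE - ptrS ρ') * LE).trace = ((ptrE ρ' - ρS) * LS).trace := by
    rw [Matrix.sub_mul, Matrix.sub_mul, Matrix.trace_sub, Matrix.trace_sub]
    have := key
    rw [expand1, expand2] at this
    linear_combination -this
  rw [main]

end
end

section
/- If ρ*_S is a global fixed point, i.e., U(ρ*_S ⊗ ρ_E)U† = ρ*_S ⊗ ρ_E, then the entropy production satisfies Σ = S(ρ_S ‖ ρ*_S) − S(ρ'_S ‖ ρ*_S), and in particular S(ρ'_S ‖ ρ*_S) ≤ S(ρ_S ‖ ρ*_S). -/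
open Matrix Kronecker BigOperators
open scoped ComplexOrder

noncomputable section

namespace EntProd
open Polynomial
variable {n m : Type*} [Fintype n] [DecidableEq n] [Fintype m] [DecidableEq m]



/-- conjugation by a unitary, as an algebra homomorphism -/
def conjAH (W : Matrix.unitaryGroup n ℂ) : Matrix n n ℂ →ₐ[ℂ] Matrix n n ℂ where
  toFun X := (W : Matrix n n ℂ) * X * star (W : Matrix n n ℂ)
  map_one' := by simpa using Matrix.mem_unitaryGroup_iff.mp W.2
  map_mul' X Y := by
    have h : star (W : Matrix n n ℂ) * (W : Matrix n n ℂ) = 1 :=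
      Matrix.mem_unitaryGroup_iff'.mp W.2
    calc (W : Matrix n n ℂ) * (X * Y) * star (W : Matrix n n ℂ)
        = (W : Matrix n n ℂ) * X * (star (W : Matrix n n ℂ) * (W : Matrix n n ℂ)) * Y *
          star (W : Matrix n n ℂ) := by rw [h]; noncomm_ring
      _ = _ := by noncomm_ring
  map_zero' := by simp
  map_add' X Y := by noncomm_ring
  commutes' r := by
    have h : (W : Matrix n n ℂ) * star (W : Matrix n n ℂ) = 1 :=
      Matrix.mem_unitaryGroup_iff.mp W.2
    simp [Algebra.algebraMap_eq_smul_one, Matrix.mul_smul, Matrix.smul_mul, h]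

lemma aeval_rep (W : Matrix.unitaryGroup n ℂ) (c : n → ℂ) (q : ℂ[X]) :
    aeval ((W : Matrix n n ℂ) * Matrix.diagonal c * star (W : Matrix n n ℂ)) q
      = (W : Matrix n n ℂ) * Matrix.diagonal (fun i => q.eval (c i)) * star (W : Matrix n n ℂ) := by
  have h1 : (W : Matrix n n ℂ) * Matrix.diagonal c * star (W : Matrix n n ℂ)
      = conjAH W (Matrix.diagonalAlgHom ℂ c) := rfl
  rw [h1, aeval_algHom_apply, aeval_algHom_apply]
  have h2 : aeval c q = fun i => q.eval (c i) := by
    funext i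
    simp [aeval_def, eval₂_eq_eval_map]
  rw [h2]; rfl






lemma herm_of_rep (W : Matrix.unitaryGroup n ℂ) (d : n → ℝ) {M : Matrix n n ℂ}
    (hM : M = (W : Matrix n n ℂ) * Matrix.diagonal (fun i => (d i : ℂ)) *
      star (W : Matrix n n ℂ)) : M.IsHermitian := by
  have hd : (Matrix.diagonal fun i => ((d i : ℝ) : ℂ))ᴴ
      = Matrix.diagonal fun i => ((d i : ℝ) : ℂ) := by
    rw [Matrix.diagonal_conjTranspose]
    have h : (star fun i => ((d i : ℝ) : ℂ)) = fun i => ((d i : ℝ) : ℂ) :=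
      funext fun i => Complex.conj_ofReal (d i)
    rw [h]
  rw [hM]
  unfold Matrix.IsHermitian
  simp only [Matrix.star_eq_conjTranspose, Matrix.conjTranspose_mul,
    Matrix.conjTranspose_conjTranspose, hd]
  noncomm_ring

lemma matLog_rep (W : Matrix.unitaryGroup n ℂ) (d : n → ℝ) {M : Matrix n n ℂ}
    (hM : M = (W : Matrix n n ℂ) * Matrix.diagonal (fun i => (d i : ℂ)) *
      star (W : Matrix n n ℂ)) :
    matLog M = (W : Matrix n n ℂ) * Matrix.diagonal (fun i => (Real.log (d i) : ℂ)) *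
      star (W : Matrix n n ℂ) := by
  have hH : M.IsHermitian := herm_of_rep W d hM
  set V := hH.eigenvectorUnitary with hV
  have hspec : M = (V : Matrix n n ℂ) *
      Matrix.diagonal (fun i => ((hH.eigenvalues i : ℝ) : ℂ)) * star (V : Matrix n n ℂ) := by
    exact hH.spectral_theorem
  set T : Finset ℝ := Finset.image hH.eigenvalues Finset.univ ∪ Finset.image d Finset.univ with hT
  set p : ℝ[X] := Lagrange.interpolate T id Real.log with hp
  have hpeval : ∀ x ∈ T, p.eval x = Real.log x := fun x hx =>
    Lagrange.eval_interpolate_at_node _ (Set.injOn_id _) hx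
  set q : ℂ[X] := p.map (algebraMap ℝ ℂ) with hq
  have hqeval : ∀ x ∈ T, q.eval (x : ℂ) = ((Real.log x : ℝ) : ℂ) := by
    intro x hx
    rw [hq]
    have : ((x : ℝ) : ℂ) = algebraMap ℝ ℂ x := rfl
    rw [this, Polynomial.eval_map, Polynomial.eval₂_at_apply, hpeval x hx]
    rfl
  have hfun1 : (fun i => q.eval ((hH.eigenvalues i : ℝ) : ℂ))
      = fun i => ((Real.log (hH.eigenvalues i) : ℝ) : ℂ) := by
    funext i
    exact hqeval _ (Finset.mem_union_left _ (Finset.mem_image_of_mem _ (Finset.mem_univ i)))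
  have hfun2 : (fun i => q.eval ((d i : ℝ) : ℂ))
      = fun i => ((Real.log (d i) : ℝ) : ℂ) := by
    funext i
    exact hqeval _ (Finset.mem_union_right _ (Finset.mem_image_of_mem _ (Finset.mem_univ i)))
  have h1 := aeval_rep V (fun i => ((hH.eigenvalues i : ℝ) : ℂ)) q
  rw [← hspec, hfun1] at h1
  have h2 := aeval_rep W (fun i => ((d i : ℝ) : ℂ)) q
  rw [← hM, hfun2] at h2
  rw [matLog, dif_pos hH, ← h1, h2]



lemma spectral_rep {A : Matrix n n ℂ} (hA : A.IsHermitian) :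
    A = (hA.eigenvectorUnitary : Matrix n n ℂ) *
      Matrix.diagonal (fun i => ((hA.eigenvalues i : ℝ) : ℂ)) *
      star (hA.eigenvectorUnitary : Matrix n n ℂ) := by
  exact hA.spectral_theorem

/-- Kronecker product of unitaries is unitary. -/
lemma kron_unitary (V : Matrix.unitaryGroup n ℂ) (W : Matrix.unitaryGroup m ℂ) :
    (V : Matrix n n ℂ) ⊗ₖ (W : Matrix m m ℂ) ∈ Matrix.unitaryGroup (n × m) ℂ := by
  rw [Matrix.mem_unitaryGroup_iff]
  have hstar : star ((V : Matrix n n ℂ) ⊗ₖ (W : Matrix m m ℂ))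
      = star (V : Matrix n n ℂ) ⊗ₖ star (W : Matrix m m ℂ) := by
    ext ⟨i, j⟩ ⟨k, l⟩
    simp [Matrix.star_eq_conjTranspose, Matrix.conjTranspose_apply, Matrix.kroneckerMap_apply,
      _root_.map_mul]
  rw [hstar, ← Matrix.mul_kronecker_mul, Matrix.mem_unitaryGroup_iff.mp V.2,
    Matrix.mem_unitaryGroup_iff.mp W.2, Matrix.one_kronecker_one]

lemma posDef_of_rep (W : Matrix.unitaryGroup n ℂ) (d : n → ℝ) (hd : ∀ i, 0 < d i)
    {M : Matrix n n ℂ}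
    (hM : M = (W : Matrix n n ℂ) * Matrix.diagonal (fun i => (d i : ℂ)) *
      star (W : Matrix n n ℂ)) : M.PosDef := by
  refine Matrix.PosDef.of_dotProduct_mulVec_pos (herm_of_rep W d hM) fun x hx => ?_
  set Wm := (W : Matrix n n ℂ) with hWm
  have hWW : Wm * star Wm = 1 := Matrix.mem_unitaryGroup_iff.mp W.2
  set y := star Wm *ᵥ x with hy
  have hxy : Wm *ᵥ y = x := by
    rw [hy, Matrix.mulVec_mulVec, hWW, Matrix.one_mulVec]
  have hyne : y ≠ 0 := by
    intro h
    apply hx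
    rw [← hxy, h, Matrix.mulVec_zero]
  have hMx : M *ᵥ x = Wm *ᵥ (Matrix.diagonal (fun i => (d i : ℂ)) *ᵥ y) := by
    rw [hM, ← Matrix.mulVec_mulVec, ← Matrix.mulVec_mulVec]
  have hsxy : star x ᵥ* Wm = star y := by
    rw [hy, Matrix.star_mulVec, Matrix.star_eq_conjTranspose, Matrix.conjTranspose_conjTranspose]
  have hform : dotProduct (star x) (M *ᵥ x)
      = ∑ i, ((d i * Complex.normSq (y i) : ℝ) : ℂ) := by
    rw [hMx, Matrix.dotProduct_mulVec, hsxy, dotProduct]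
    refine Finset.sum_congr rfl fun i _ => ?_
    rw [Matrix.mulVec_diagonal]
    have : star (y i) * ((d i : ℂ) * y i) = (d i : ℂ) * (y i * star (y i)) := by ring
    rw [Pi.star_apply, this, Complex.star_def, Complex.mul_conj]
    push_cast
    ring
  rw [hform]
  obtain ⟨i, hi⟩ := Function.ne_iff.mp hyne
  refine Finset.sum_pos' (fun j _ => ?_) ⟨i, Finset.mem_univ i, ?_⟩
  · rw [Complex.zero_le_real]
    exact mul_nonneg (hd j).le (Complex.normSq_nonneg _)
  · rw [Complex.zero_lt_real]
    have : 0 < Complex.normSq (y i) := Complex.normSq_pos.mpr hi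
    exact mul_pos (hd i) this

lemma matLog_conj {U A : Matrix n n ℂ} (hU : U ∈ Matrix.unitaryGroup n ℂ)
    (hA : A.IsHermitian) :
    matLog (U * A * Uᴴ) = U * matLog A * Uᴴ := by
  set V := hA.eigenvectorUnitary with hV
  set UV : Matrix.unitaryGroup n ℂ := ⟨U, hU⟩ * V with hUV
  have hcoe : (UV : Matrix n n ℂ) = U * (V : Matrix n n ℂ) := rfl
  have hrep : U * A * Uᴴ = (UV : Matrix n n ℂ) *
      Matrix.diagonal (fun i => ((hA.eigenvalues i : ℝ) : ℂ)) * star (UV : Matrix n n ℂ) := by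
    rw [hcoe]
    conv_lhs => rw [spectral_rep hA]
    simp only [Matrix.star_eq_conjTranspose, Matrix.conjTranspose_mul, star_eq_conjTranspose]
    noncomm_ring
  rw [matLog_rep UV hA.eigenvalues hrep, matLog_rep V hA.eigenvalues (spectral_rep hA), hcoe]
  simp only [Matrix.star_eq_conjTranspose, Matrix.conjTranspose_mul]
  noncomm_ring

lemma matLog_kron {A : Matrix n n ℂ} {B : Matrix m m ℂ} (hA : A.PosDef) (hB : B.PosDef) :
    matLog (A ⊗ₖ B) = matLog A ⊗ₖ (1 : Matrix m m ℂ) + (1 : Matrix n n ℂ) ⊗ₖ matLog B := by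
  set V := hA.1.eigenvectorUnitary with hV
  set W := hB.1.eigenvectorUnitary with hW
  set VW : Matrix.unitaryGroup (n × m) ℂ := ⟨_, kron_unitary V W⟩ with hVW
  have hstar : star ((V : Matrix n n ℂ) ⊗ₖ (W : Matrix m m ℂ))
      = star (V : Matrix n n ℂ) ⊗ₖ star (W : Matrix m m ℂ) := by
    ext ⟨i, j⟩ ⟨k, l⟩
    simp [Matrix.star_eq_conjTranspose, Matrix.conjTranspose_apply, Matrix.kroneckerMap_apply,
      _root_.map_mul]
  have hrep : A ⊗ₖ B = (VW : Matrix (n × m) (n × m) ℂ) *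
      Matrix.diagonal (fun p : n × m => ((hA.1.eigenvalues p.1 * hB.1.eigenvalues p.2 : ℝ) : ℂ)) *
      star (VW : Matrix (n × m) (n × m) ℂ) := by
    have hdd : (Matrix.diagonal fun i => ((hA.1.eigenvalues i : ℝ) : ℂ)) ⊗ₖ
        (Matrix.diagonal fun j => ((hB.1.eigenvalues j : ℝ) : ℂ)) =
        Matrix.diagonal (fun p : n × m =>
          ((hA.1.eigenvalues p.1 * hB.1.eigenvalues p.2 : ℝ) : ℂ)) := by
      rw [Matrix.diagonal_kronecker_diagonal]
      congr 1
      funext p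
      push_cast
      rfl
    conv_lhs => rw [spectral_rep hA.1, spectral_rep hB.1]
    show _ = ((V : Matrix n n ℂ) ⊗ₖ (W : Matrix m m ℂ)) * _ * star _
    rw [hstar, ← hdd, ← Matrix.mul_kronecker_mul, ← Matrix.mul_kronecker_mul]
  rw [matLog_rep VW _ hrep, matLog_rep V hA.1.eigenvalues (spectral_rep hA.1),
    matLog_rep W hB.1.eigenvalues (spectral_rep hB.1)]
  have hlog : (fun p : n × m => ((Real.log (hA.1.eigenvalues p.1 * hB.1.eigenvalues p.2) : ℝ) : ℂ))
      = fun p : n × m => ((Real.log (hA.1.eigenvalues p.1) : ℝ) : ℂ) +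
          ((Real.log (hB.1.eigenvalues p.2) : ℝ) : ℂ) := by
    funext p
    rw [Real.log_mul (ne_of_gt (hA.eigenvalues_pos p.1)) (ne_of_gt (hB.eigenvalues_pos p.2))]
    push_cast
    rfl
  show ((V : Matrix n n ℂ) ⊗ₖ (W : Matrix m m ℂ)) * _ * star ((V : Matrix n n ℂ) ⊗ₖ (W : Matrix m m ℂ)) = _
  rw [hlog, hstar]
  have hsplit : Matrix.diagonal (fun p : n × m =>
      ((Real.log (hA.1.eigenvalues p.1) : ℝ) : ℂ) + ((Real.log (hB.1.eigenvalues p.2) : ℝ) : ℂ))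
      = (Matrix.diagonal fun i => ((Real.log (hA.1.eigenvalues i) : ℝ) : ℂ)) ⊗ₖ
          (1 : Matrix m m ℂ) +
        (1 : Matrix n n ℂ) ⊗ₖ (Matrix.diagonal fun j => ((Real.log (hB.1.eigenvalues j) : ℝ) : ℂ)) := by
    have h1 : (1 : Matrix m m ℂ) = Matrix.diagonal (fun _ => (1 : ℂ)) := by simp
    have h2 : (1 : Matrix n n ℂ) = Matrix.diagonal (fun _ => (1 : ℂ)) := by simp
    rw [h1, h2, Matrix.diagonal_kronecker_diagonal, Matrix.diagonal_kronecker_diagonal,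
      Matrix.diagonal_add]
    exact congrArg Matrix.diagonal (funext fun p => by ring)
  rw [hsplit, Matrix.mul_add, Matrix.add_mul, ← Matrix.mul_kronecker_mul,
    ← Matrix.mul_kronecker_mul, ← Matrix.mul_kronecker_mul, ← Matrix.mul_kronecker_mul]
  have hVu : (V : Matrix n n ℂ) * 1 * star (V : Matrix n n ℂ) = 1 := by
    rw [Matrix.mul_one]; exact Matrix.mem_unitaryGroup_iff.mp V.2
  have hWu : (W : Matrix m m ℂ) * 1 * star (W : Matrix m m ℂ) = 1 := by
    rw [Matrix.mul_one]; exact Matrix.mem_unitaryGroup_iff.mp W.2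
  rw [hVu, hWu]



lemma trace_conj_unitary (Wu : Matrix.unitaryGroup n ℂ) (A : Matrix n n ℂ) :
    ((Wu : Matrix n n ℂ) * A * star (Wu : Matrix n n ℂ)).trace = A.trace := by
  rw [Matrix.trace_mul_cycle, Matrix.mem_unitaryGroup_iff'.mp Wu.2, Matrix.one_mul]

lemma conj_mul_conj (Wu : Matrix.unitaryGroup n ℂ) (A B : Matrix n n ℂ) :
    ((Wu : Matrix n n ℂ) * A * star (Wu : Matrix n n ℂ)) *
      ((Wu : Matrix n n ℂ) * B * star (Wu : Matrix n n ℂ))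
    = (Wu : Matrix n n ℂ) * (A * B) * star (Wu : Matrix n n ℂ) := by
  have h : star (Wu : Matrix n n ℂ) * (Wu : Matrix n n ℂ) = 1 :=
    Matrix.mem_unitaryGroup_iff'.mp Wu.2
  simp only [Matrix.mul_assoc]
  rw [show star (Wu : Matrix n n ℂ) * ((Wu : Matrix n n ℂ) * (B * star (Wu : Matrix n n ℂ)))
      = B * star (Wu : Matrix n n ℂ) from by rw [← Matrix.mul_assoc, h, Matrix.one_mul]]

lemma trace_eq_sum_eigen {A : Matrix n n ℂ} (hA : A.IsHermitian) :
    A.trace = ∑ i, ((hA.eigenvalues i : ℝ) : ℂ) := by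
  conv_lhs => rw [spectral_rep hA]
  rw [trace_conj_unitary, Matrix.trace_diagonal]

/-- Re of Tr(ρ log ρ) in terms of eigenvalues. -/
lemma re_trace_mul_matLog_self {ρ : Matrix n n ℂ} (hρ : ρ.PosDef) :
    ((ρ * matLog ρ).trace).re = ∑ i, hρ.1.eigenvalues i * Real.log (hρ.1.eigenvalues i) := by
  have key : ρ * matLog ρ = (hρ.1.eigenvectorUnitary : Matrix n n ℂ) *
      (Matrix.diagonal (fun i => ((hρ.1.eigenvalues i : ℝ) : ℂ)) *
        Matrix.diagonal (fun i => ((Real.log (hρ.1.eigenvalues i) : ℝ) : ℂ))) *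
      star (hρ.1.eigenvectorUnitary : Matrix n n ℂ) := by
    rw [matLog_rep _ _ (spectral_rep hρ.1)]
    rw [← conj_mul_conj hρ.1.eigenvectorUnitary, ← spectral_rep hρ.1]
  rw [key, trace_conj_unitary, Matrix.diagonal_mul_diagonal, Matrix.trace_diagonal]
  have : ∀ i, ((hρ.1.eigenvalues i : ℝ) : ℂ) * ((Real.log (hρ.1.eigenvalues i) : ℝ) : ℂ)
      = ((hρ.1.eigenvalues i * Real.log (hρ.1.eigenvalues i) : ℝ) : ℂ) := by
    intro i; push_cast; ring
  rw [Finset.sum_congr rfl fun i _ => this i, ← Complex.ofReal_sum, Complex.ofReal_re]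

/-- Klein's inequality. -/
lemma klein {ρ σ : Matrix n n ℂ} (hρ : ρ.PosDef) (hσ : σ.PosDef)
    (hρt : ρ.trace = 1) (hσt : σ.trace = 1) :
    0 ≤ ((ρ * matLog ρ - ρ * matLog σ).trace).re := by
  set V := hρ.1.eigenvectorUnitary with hV
  set W := hσ.1.eigenvectorUnitary with hW
  set p := hρ.1.eigenvalues with hp
  set q := hσ.1.eigenvalues with hq
  set Cm : Matrix n n ℂ := star (V : Matrix n n ℂ) * (W : Matrix n n ℂ) with hCm
  have hCstar : star Cm = star (W : Matrix n n ℂ) * (V : Matrix n n ℂ) := by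
    rw [hCm, Matrix.star_mul, star_star]
  have hCC : Cm * star Cm = 1 := by
    rw [hCm, hCstar, Matrix.mul_assoc, ← Matrix.mul_assoc (W : Matrix n n ℂ),
      Matrix.mem_unitaryGroup_iff.mp W.2, Matrix.one_mul,
      Matrix.mem_unitaryGroup_iff'.mp V.2]
  have hCC' : star Cm * Cm = 1 := by
    rw [hCm, hCstar, Matrix.mul_assoc, ← Matrix.mul_assoc (V : Matrix n n ℂ),
      Matrix.mem_unitaryGroup_iff.mp V.2, Matrix.one_mul,
      Matrix.mem_unitaryGroup_iff'.mp W.2]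
  set w : n → n → ℝ := fun i j => Complex.normSq (Cm i j) with hw
  have hwnn : ∀ i j, 0 ≤ w i j := fun i j => Complex.normSq_nonneg _
  have hrow : ∀ i, ∑ j, w i j = 1 := by
    intro i
    have h1 : (Cm * star Cm) i i = 1 := by rw [hCC]; simp
    rw [Matrix.mul_apply] at h1
    have h2 : ∀ j, Cm i j * star Cm j i = ((w i j : ℝ) : ℂ) := by
      intro j
      rw [Matrix.star_apply, Complex.star_def, Complex.mul_conj]
    rw [Finset.sum_congr rfl fun j _ => h2 j, ← Complex.ofReal_sum] at h1
    exact_mod_cast h1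
  have hcol : ∀ j, ∑ i, w i j = 1 := by
    intro j
    have h1 : (star Cm * Cm) j j = 1 := by rw [hCC']; simp
    rw [Matrix.mul_apply] at h1
    have h2 : ∀ i, star Cm j i * Cm i j = ((w i j : ℝ) : ℂ) := by
      intro i
      rw [Matrix.star_apply, Complex.star_def, mul_comm, Complex.mul_conj]
    rw [Finset.sum_congr rfl fun i _ => h2 i, ← Complex.ofReal_sum] at h1
    exact_mod_cast h1
  have hppos : ∀ i, 0 < p i := fun i => hρ.eigenvalues_pos i
  have hqpos : ∀ j, 0 < q j := fun j => hσ.eigenvalues_pos j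
  have hpsum : ∑ i, p i = 1 := by
    have := trace_eq_sum_eigen hρ.1
    rw [hρt, ← Complex.ofReal_sum] at this
    exact_mod_cast this.symm
  have hqsum : ∑ j, q j = 1 := by
    have := trace_eq_sum_eigen hσ.1
    rw [hσt, ← Complex.ofReal_sum] at this
    exact_mod_cast this.symm
  -- second trace
  have key : ρ * matLog σ = (V : Matrix n n ℂ) *
      (Matrix.diagonal (fun i => ((p i : ℝ) : ℂ)) *
        (Cm * Matrix.diagonal (fun j => ((Real.log (q j) : ℝ) : ℂ)) * star Cm)) *
      star (V : Matrix n n ℂ) := by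
    have halg : ∀ A B : Matrix n n ℂ,
        (V : Matrix n n ℂ) * (A * ((star (V : Matrix n n ℂ) * (W : Matrix n n ℂ)) * B *
          (star (W : Matrix n n ℂ) * (V : Matrix n n ℂ)))) * star (V : Matrix n n ℂ)
        = ((V : Matrix n n ℂ) * A * star (V : Matrix n n ℂ)) *
            ((W : Matrix n n ℂ) * B * star (W : Matrix n n ℂ)) := by
      intro A B
      have h : (V : Matrix n n ℂ) * star (V : Matrix n n ℂ) = 1 :=
        Matrix.mem_unitaryGroup_iff.mp V.2
      simp only [Matrix.mul_assoc]
      rw [h, Matrix.mul_one]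
    rw [matLog_rep _ _ (spectral_rep hσ.1), hCm, hCstar, halg, ← spectral_rep hρ.1]
  have h2 : ((ρ * matLog σ).trace).re = ∑ i, ∑ j, p i * w i j * Real.log (q j) := by
    rw [key, trace_conj_unitary]
    have htr : (Matrix.diagonal (fun i => ((p i : ℝ) : ℂ)) *
        (Cm * Matrix.diagonal (fun j => ((Real.log (q j) : ℝ) : ℂ)) * star Cm)).trace
        = ∑ i, ∑ j, ((p i * w i j * Real.log (q j) : ℝ) : ℂ) := by
      rw [Matrix.trace]
      refine Finset.sum_congr rfl fun i _ => ?_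
      rw [Matrix.diag_apply, Matrix.diagonal_mul, Matrix.mul_apply, Finset.mul_sum]
      refine Finset.sum_congr rfl fun j _ => ?_
      rw [Matrix.mul_diagonal, Matrix.star_apply]
      have hcc : Cm i j * star (Cm i j) = ((w i j : ℝ) : ℂ) := by
        rw [Complex.star_def, Complex.mul_conj]
      calc ((p i : ℝ) : ℂ) * (Cm i j * ((Real.log (q j) : ℝ) : ℂ) * star (Cm i j))
          = ((p i : ℝ) : ℂ) * ((Real.log (q j) : ℝ) : ℂ) * (Cm i j * star (Cm i j)) := by ring
        _ = ((p i * w i j * Real.log (q j) : ℝ) : ℂ) := by rw [hcc]; push_cast; ring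
    rw [htr]
    simp only [← Complex.ofReal_sum]
    rw [Complex.ofReal_re]
  -- first trace
  have h1 : ((ρ * matLog ρ).trace).re = ∑ i, p i * Real.log (p i) :=
    re_trace_mul_matLog_self hρ
  -- real analysis
  rw [Matrix.trace_sub, Complex.sub_re, h1, h2, sub_nonneg]
  set r : n → ℝ := fun i => ∑ j, w i j * q j with hr
  have hrpos : ∀ i, 0 < r i := by
    intro i
    have hex : ∃ j, (0 : ℝ) < w i j := by
      by_contra hcon
      push_neg at hcon
      have : ∑ j, w i j ≤ 0 := Finset.sum_nonpos fun j _ => hcon j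
      rw [hrow i] at this
      linarith
    obtain ⟨j, hj⟩ := hex
    exact Finset.sum_pos' (fun k _ => mul_nonneg (hwnn i k) (hqpos k).le)
      ⟨j, Finset.mem_univ j, mul_pos hj (hqpos j)⟩
  have hrsum : ∑ i, r i = 1 := by
    rw [hr]
    rw [Finset.sum_comm]
    calc ∑ j, ∑ i, w i j * q j = ∑ j, (∑ i, w i j) * q j := by
          refine Finset.sum_congr rfl fun j _ => ?_
          rw [Finset.sum_mul]
      _ = ∑ j, q j := by
          refine Finset.sum_congr rfl fun j _ => ?_
          rw [hcol j, one_mul]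
      _ = 1 := hqsum
  have hjensen : ∀ i, ∑ j, w i j * Real.log (q j) ≤ Real.log (r i) := by
    intro i
    have := (strictConcaveOn_log_Ioi.concaveOn).le_map_sum
      (t := Finset.univ) (w := w i) (p := q)
      (fun j _ => hwnn i j) (hrow i) (fun j _ => Set.mem_Ioi.mpr (hqpos j))
    simpa [smul_eq_mul] using this
  have hlogineq : ∀ i, 1 - r i / p i ≤ Real.log (p i) - Real.log (r i) := by
    intro i
    have h := Real.log_le_sub_one_of_pos (x := r i / p i) (div_pos (hrpos i) (hppos i))
    rw [Real.log_div (hrpos i).ne' (hppos i).ne'] at h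
    linarith
  calc ∑ i, ∑ j, p i * w i j * Real.log (q j)
      = ∑ i, p i * ∑ j, w i j * Real.log (q j) := by
        refine Finset.sum_congr rfl fun i _ => ?_
        rw [Finset.mul_sum]
        refine Finset.sum_congr rfl fun j _ => ?_
        ring
    _ ≤ ∑ i, p i * Real.log (r i) := by
        refine Finset.sum_le_sum fun i _ => ?_
        exact mul_le_mul_of_nonneg_left (hjensen i) (hppos i).le
    _ ≤ ∑ i, p i * Real.log (p i) := by
        have hstep : ∀ i, p i - r i ≤ p i * Real.log (p i) - p i * Real.log (r i) := by
          intro i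
          have := mul_le_mul_of_nonneg_left (hlogineq i) (hppos i).le
          have hne : p i ≠ 0 := (hppos i).ne'
          calc p i - r i = p i * (1 - r i / p i) := by field_simp
            _ ≤ p i * (Real.log (p i) - Real.log (r i)) := this
            _ = p i * Real.log (p i) - p i * Real.log (r i) := by ring
        have hsum := Finset.sum_le_sum fun i (_ : i ∈ Finset.univ) => hstep i
        rw [Finset.sum_sub_distrib, Finset.sum_sub_distrib, hpsum, hrsum] at hsum
        linarith

lemma posDef_conj {U A : Matrix n n ℂ} (hU : U ∈ Matrix.unitaryGroup n ℂ) (hA : A.PosDef) :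
    (U * A * Uᴴ).PosDef := by
  set V := hA.1.eigenvectorUnitary with hV
  set UV : Matrix.unitaryGroup n ℂ := ⟨U, hU⟩ * V with hUV
  have hcoe : (UV : Matrix n n ℂ) = U * (V : Matrix n n ℂ) := rfl
  have hrep : U * A * Uᴴ = (UV : Matrix n n ℂ) *
      Matrix.diagonal (fun i => ((hA.1.eigenvalues i : ℝ) : ℂ)) * star (UV : Matrix n n ℂ) := by
    rw [hcoe]
    conv_lhs => rw [spectral_rep hA.1]
    simp only [Matrix.star_eq_conjTranspose, Matrix.conjTranspose_mul]
    noncomm_ring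
  exact posDef_of_rep UV hA.1.eigenvalues (fun i => hA.eigenvalues_pos i) hrep

lemma posDef_kron {A : Matrix n n ℂ} {B : Matrix m m ℂ} (hA : A.PosDef) (hB : B.PosDef) :
    (A ⊗ₖ B).PosDef := by
  set V := hA.1.eigenvectorUnitary with hV
  set W := hB.1.eigenvectorUnitary with hW
  set VW : Matrix.unitaryGroup (n × m) ℂ := ⟨_, kron_unitary V W⟩ with hVW
  have hstar : star ((V : Matrix n n ℂ) ⊗ₖ (W : Matrix m m ℂ))
      = star (V : Matrix n n ℂ) ⊗ₖ star (W : Matrix m m ℂ) := by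
    ext ⟨i, j⟩ ⟨k, l⟩
    simp [Matrix.star_eq_conjTranspose, Matrix.conjTranspose_apply, Matrix.kroneckerMap_apply,
      _root_.map_mul]
  have hrep : A ⊗ₖ B = (VW : Matrix (n × m) (n × m) ℂ) *
      Matrix.diagonal (fun p : n × m => ((hA.1.eigenvalues p.1 * hB.1.eigenvalues p.2 : ℝ) : ℂ)) *
      star (VW : Matrix (n × m) (n × m) ℂ) := by
    have hdd : (Matrix.diagonal fun i => ((hA.1.eigenvalues i : ℝ) : ℂ)) ⊗ₖ
        (Matrix.diagonal fun j => ((hB.1.eigenvalues j : ℝ) : ℂ)) =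
        Matrix.diagonal (fun p : n × m =>
          ((hA.1.eigenvalues p.1 * hB.1.eigenvalues p.2 : ℝ) : ℂ)) := by
      rw [Matrix.diagonal_kronecker_diagonal]
      exact congrArg Matrix.diagonal (funext fun p => by push_cast; rfl)
    conv_lhs => rw [spectral_rep hA.1, spectral_rep hB.1]
    show _ = ((V : Matrix n n ℂ) ⊗ₖ (W : Matrix m m ℂ)) * _ * star _
    rw [hstar, ← hdd, ← Matrix.mul_kronecker_mul, ← Matrix.mul_kronecker_mul]
  exact posDef_of_rep VW _
    (fun p => mul_pos (hA.eigenvalues_pos p.1) (hB.eigenvalues_pos p.2)) hrep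

lemma trace_conj_unitary' {U : Matrix n n ℂ} (hU : U ∈ Matrix.unitaryGroup n ℂ)
    (A : Matrix n n ℂ) : (U * A * Uᴴ).trace = A.trace := by
  rw [← Matrix.star_eq_conjTranspose]
  exact trace_conj_unitary ⟨U, hU⟩ A

lemma conj_mul_conj' {U : Matrix n n ℂ} (hU : U ∈ Matrix.unitaryGroup n ℂ)
    (A B : Matrix n n ℂ) : (U * A * Uᴴ) * (U * B * Uᴴ) = U * (A * B) * Uᴴ := by
  rw [← Matrix.star_eq_conjTranspose]
  exact conj_mul_conj ⟨U, hU⟩ A B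

section Ptr
variable {s e : Type*} [Fintype s] [DecidableEq s] [Fintype e] [DecidableEq e]

lemma ptrE_trace (ρ : Matrix (s × e) (s × e) ℂ) : (ptrE ρ).trace = ρ.trace := by
  rw [Matrix.trace, Matrix.trace]
  simp only [Matrix.diag_apply, ptrE, Matrix.of_apply, Fintype.sum_prod_type]

lemma ptrS_trace (ρ : Matrix (s × e) (s × e) ℂ) : (ptrS ρ).trace = ρ.trace := by
  rw [Matrix.trace, Matrix.trace]
  simp only [Matrix.diag_apply, ptrS, Matrix.of_apply, Fintype.sum_prod_type]
  exact Finset.sum_comm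

lemma trace_mul_kron_one (ρ : Matrix (s × e) (s × e) ℂ) (A : Matrix s s ℂ) :
    (ρ * (A ⊗ₖ (1 : Matrix e e ℂ))).trace = (ptrE ρ * A).trace := by
  rw [Matrix.trace, Matrix.trace]
  simp only [Matrix.diag_apply, Matrix.mul_apply, ptrE, Matrix.of_apply,
    Matrix.kroneckerMap_apply, Matrix.one_apply, Fintype.sum_prod_type, Finset.sum_mul,
    mul_ite, mul_one, mul_zero, Finset.sum_ite_eq', Finset.mem_univ, if_true]
  refine Finset.sum_congr rfl fun i _ => ?_
  exact Finset.sum_comm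

lemma trace_mul_one_kron (ρ : Matrix (s × e) (s × e) ℂ) (B : Matrix e e ℂ) :
    (ρ * ((1 : Matrix s s ℂ) ⊗ₖ B)).trace = (ptrS ρ * B).trace := by
  rw [Matrix.trace, Matrix.trace]
  simp only [Matrix.diag_apply, Matrix.mul_apply, ptrS, Matrix.of_apply,
    Matrix.kroneckerMap_apply, Matrix.one_apply, Fintype.sum_prod_type, Finset.sum_mul,
    mul_ite, mul_one, mul_zero, ite_mul, zero_mul, Finset.sum_ite_eq', Finset.mem_univ, if_true]
  have h1 : ∀ (i : s) (k : e),
      (∑ x2 : s, ∑ x3 : e, if x2 = i then ρ (i, k) (x2, x3) * (1 * B x3 k) else 0)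
      = ∑ l : e, ρ (i, k) (i, l) * B l k := by
    intro i k
    rw [Finset.sum_comm]
    simp
  simp only [h1]
  exact Finset.sum_comm.trans (Finset.sum_congr rfl fun k _ => Finset.sum_comm)

lemma ptrE_isHermitian {ρ : Matrix (s × e) (s × e) ℂ} (h : ρ.IsHermitian) :
    (ptrE ρ).IsHermitian := by
  unfold Matrix.IsHermitian
  ext i j
  rw [Matrix.conjTranspose_apply, ptrE, Matrix.of_apply, Matrix.of_apply, star_sum]
  refine Finset.sum_congr rfl fun k _ => ?_
  calc star (ρ (j, k) (i, k)) = ρᴴ (i, k) (j, k) := (Matrix.conjTranspose_apply _ _ _).symm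
    _ = ρ (i, k) (j, k) := by rw [h]

lemma ptrS_isHermitian {ρ : Matrix (s × e) (s × e) ℂ} (h : ρ.IsHermitian) :
    (ptrS ρ).IsHermitian := by
  unfold Matrix.IsHermitian
  ext i j
  rw [Matrix.conjTranspose_apply, ptrS, Matrix.of_apply, Matrix.of_apply, star_sum]
  refine Finset.sum_congr rfl fun k _ => ?_
  calc star (ρ (k, j) (k, i)) = ρᴴ (k, i) (k, j) := (Matrix.conjTranspose_apply _ _ _).symm
    _ = ρ (k, i) (k, j) := by rw [h]

lemma ptrE_posDef [Nonempty e] {ρ : Matrix (s × e) (s × e) ℂ} (hρ : ρ.PosDef) :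
    (ptrE ρ).PosDef := by
  refine Matrix.PosDef.of_dotProduct_mulVec_pos (ptrE_isHermitian hρ.1) fun x hx => ?_
  set X : e → (s × e) → ℂ := fun k p => if p.2 = k then x p.1 else 0 with hX
  have hform : dotProduct (star x) (ptrE ρ *ᵥ x)
      = ∑ k, dotProduct (star (X k)) (ρ *ᵥ (X k)) := by
    simp only [dotProduct, Matrix.mulVec, ptrE, Matrix.of_apply, Pi.star_apply, hX,
      Fintype.sum_prod_type, apply_ite, star_zero, ite_mul, zero_mul, mul_ite, mul_zero,
      Finset.sum_ite_eq', Finset.mem_univ, if_true, Finset.mul_sum, Finset.sum_mul]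
    have h2 : ∀ (k : e) (i : s),
        (∑ x3 : e, ∑ x4 : s, if x3 = k then star (x i) * (ρ (i, x3) (x4, k) * x x4) else 0)
        = ∑ j : s, star (x i) * (ρ (i, k) (j, k) * x j) := by
      intro k i
      rw [Finset.sum_comm]
      simp
    simp only [h2]
    exact (Finset.sum_congr rfl fun i _ => Finset.sum_comm).trans Finset.sum_comm
  have hXne : ∀ k, X k ≠ 0 := by
    intro k h0
    obtain ⟨i, hi⟩ := Function.ne_iff.mp hx
    apply hi
    have := congrFun h0 (i, k)
    simpa [hX] using this
  rw [hform]
  exact Finset.sum_pos (fun k _ => hρ.dotProduct_mulVec_pos (hXne k)) Finset.univ_nonempty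

lemma ptrS_posDef [Nonempty s] {ρ : Matrix (s × e) (s × e) ℂ} (hρ : ρ.PosDef) :
    (ptrS ρ).PosDef := by
  refine Matrix.PosDef.of_dotProduct_mulVec_pos (ptrS_isHermitian hρ.1) fun x hx => ?_
  set X : s → (s × e) → ℂ := fun k p => if p.1 = k then x p.2 else 0 with hX
  have hform : dotProduct (star x) (ptrS ρ *ᵥ x)
      = ∑ k, dotProduct (star (X k)) (ρ *ᵥ (X k)) := by
    simp only [dotProduct, Matrix.mulVec, ptrS, Matrix.of_apply, Pi.star_apply, hX,
      Fintype.sum_prod_type, apply_ite, star_zero, ite_mul, zero_mul, mul_ite, mul_zero,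
      Finset.sum_ite_eq', Finset.mem_univ, if_true, Finset.mul_sum, Finset.sum_mul]
    have h3 : ∀ (k j : s) (l : e),
        (∑ x4 : s, ∑ x5 : e, if x4 = k then
            (if j = k then star (x l) * (ρ (j, l) (x4, x5) * x x5) else 0) else 0)
        = if j = k then ∑ x5 : e, star (x l) * (ρ (j, l) (k, x5) * x x5) else 0 := by
      intro k j l
      rcases eq_or_ne j k with h | h
      · simp only [h, if_true]
        simp
      · simp [h]
    simp only [h3]
    have h4 : ∀ k : s,
        (∑ x2 : s, ∑ x3 : e, if x2 = k then
            (∑ x5 : e, star (x x3) * (ρ (x2, x3) (k, x5) * x x5)) else 0)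
        = ∑ x3 : e, ∑ x5 : e, star (x x3) * (ρ (k, x3) (k, x5) * x x5) := by
      intro k
      rw [Finset.sum_comm]
      simp
    simp only [h4]
    exact (Finset.sum_congr rfl fun a _ => Finset.sum_comm).trans Finset.sum_comm
  have hXne : ∀ k, X k ≠ 0 := by
    intro k h0
    obtain ⟨i, hi⟩ := Function.ne_iff.mp hx
    apply hi
    have := congrFun h0 (k, i)
    simpa [hX] using this
  rw [hform]
  exact Finset.sum_pos (fun k _ => hρ.dotProduct_mulVec_pos (hXne k)) Finset.univ_nonempty

end Ptr

end EntProd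

/-- If `ρ*_S` is a global fixed point, `U (ρ*_S ⊗ ρE) U† = ρ*_S ⊗ ρE`,
then the entropy production `Σ = ΔS_S + Φ` (with entropy flux
`Φ = Tr_E{(ρE - ρ'_E) log ρE}`) satisfies `Σ = S(ρS‖ρ*_S) - S(ρ'_S‖ρ*_S)`, and in
particular `S(ρ'_S‖ρ*_S) ≤ S(ρS‖ρ*_S)`. -/
theorem entropy_production_fixed_point
    {s e : Type*} [Fintype s] [DecidableEq s] [Fintype e] [DecidableEq e]
    (ρS ρStar : Matrix s s ℂ) (ρE : Matrix e e ℂ) (U : Matrix (s × e) (s × e) ℂ)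
    (hρS : ρS.PosDef) (hρStr : ρS.trace = 1)
    (hρStar : ρStar.PosDef) (hρStarTr : ρStar.trace = 1)
    (hρE : ρE.PosDef) (hρEtr : ρE.trace = 1)
    (hU : U ∈ Matrix.unitaryGroup (s × e) ℂ)
    (hfix : U * (ρStar ⊗ₖ ρE) * Uᴴ = ρStar ⊗ₖ ρE)
    (ρ' : Matrix (s × e) (s × e) ℂ) (hρ' : ρ' = U * (ρS ⊗ₖ ρE) * Uᴴ) :
    ((vnEntropy (ptrE ρ') - vnEntropy ρS) + (((ρE - ptrS ρ') * matLog ρE).trace).re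
        = relEnt ρS ρStar - relEnt (ptrE ρ') ρStar)
      ∧ relEnt (ptrE ρ') ρStar ≤ relEnt ρS ρStar := by
  classical
  have hne : Nonempty e := by
    rcases isEmpty_or_nonempty e with h | h
    · exfalso
      rw [Matrix.trace] at hρEtr
      simp at hρEtr
    · exact h
  have hns : Nonempty s := by
    rcases isEmpty_or_nonempty s with h | h
    · exfalso
      rw [Matrix.trace] at hρStr
      simp at hρStr
    · exact h
  have hρ0pd : (ρS ⊗ₖ ρE).PosDef := EntProd.posDef_kron hρS hρE
  have hmixpd : (ρStar ⊗ₖ ρE).PosDef := EntProd.posDef_kron hρStar hρE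
  have hρ'pd : ρ'.PosDef := by rw [hρ']; exact EntProd.posDef_conj hU hρ0pd
  have hρ'tr : ρ'.trace = 1 := by
    rw [hρ', EntProd.trace_conj_unitary' hU, Matrix.trace_kronecker, hρStr, hρEtr, one_mul]
  have hSpd : (ptrE ρ').PosDef := EntProd.ptrE_posDef hρ'pd
  have hEpd : (ptrS ρ').PosDef := EntProd.ptrS_posDef hρ'pd
  have hStr : (ptrE ρ').trace = 1 := by rw [EntProd.ptrE_trace, hρ'tr]
  have hEtr : (ptrS ρ').trace = 1 := by rw [EntProd.ptrS_trace, hρ'tr]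
  have hmixlog : matLog (ρStar ⊗ₖ ρE) = matLog ρStar ⊗ₖ 1 + 1 ⊗ₖ matLog ρE :=
    EntProd.matLog_kron hρStar hρE
  have hfixlog : matLog (ρStar ⊗ₖ ρE) = U * matLog (ρStar ⊗ₖ ρE) * Uᴴ := by
    conv_lhs => rw [← hfix]
    exact EntProd.matLog_conj hU hmixpd.1
  -- the key exchange identity
  have hE1 : (ptrE ρ' * matLog ρStar).trace + (ptrS ρ' * matLog ρE).trace
      = (ρS * matLog ρStar).trace + (ρE * matLog ρE).trace := by
    have hL : (ρ' * matLog (ρStar ⊗ₖ ρE)).trace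
        = ((ρS ⊗ₖ ρE) * matLog (ρStar ⊗ₖ ρE)).trace := by
      rw [hρ']
      conv_lhs => rw [hfixlog]
      rw [EntProd.conj_mul_conj' hU, EntProd.trace_conj_unitary' hU]
    have e1 : (ρ' * matLog (ρStar ⊗ₖ ρE)).trace
        = (ptrE ρ' * matLog ρStar).trace + (ptrS ρ' * matLog ρE).trace := by
      rw [hmixlog, Matrix.mul_add, Matrix.trace_add, EntProd.trace_mul_kron_one,
        EntProd.trace_mul_one_kron]
    have e2 : ((ρS ⊗ₖ ρE) * matLog (ρStar ⊗ₖ ρE)).trace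
        = (ρS * matLog ρStar).trace + (ρE * matLog ρE).trace := by
      rw [hmixlog, Matrix.mul_add, Matrix.trace_add, ← Matrix.mul_kronecker_mul,
        ← Matrix.mul_kronecker_mul, Matrix.trace_kronecker, Matrix.trace_kronecker,
        Matrix.mul_one, Matrix.mul_one, hρEtr, hρStr, mul_one, one_mul]
    rw [← e1, ← e2]
    exact hL
  -- entropy of the evolved state
  have hD : (ρ' * matLog ρ').trace = (ρS * matLog ρS).trace + (ρE * matLog ρE).trace := by
    have hlog' : matLog ρ' = U * matLog (ρS ⊗ₖ ρE) * Uᴴ := by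
      rw [hρ']
      exact EntProd.matLog_conj hU hρ0pd.1
    rw [hlog', hρ', EntProd.conj_mul_conj' hU, EntProd.trace_conj_unitary' hU,
      EntProd.matLog_kron hρS hρE, Matrix.mul_add, Matrix.trace_add,
      ← Matrix.mul_kronecker_mul, ← Matrix.mul_kronecker_mul, Matrix.trace_kronecker,
      Matrix.trace_kronecker, Matrix.mul_one, Matrix.mul_one, hρEtr, hρStr, mul_one, one_mul]
  -- mutual-information trace identity
  have hC : (ρ' * matLog (ptrE ρ' ⊗ₖ ptrS ρ')).trace
      = (ptrE ρ' * matLog (ptrE ρ')).trace + (ptrS ρ' * matLog (ptrS ρ')).trace := by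
    rw [EntProd.matLog_kron hSpd hEpd, Matrix.mul_add, Matrix.trace_add,
      EntProd.trace_mul_kron_one, EntProd.trace_mul_one_kron]
  -- Klein inequalities
  have hK1 : 0 ≤ ((ρ' * matLog ρ' - ρ' * matLog (ptrE ρ' ⊗ₖ ptrS ρ')).trace).re :=
    EntProd.klein hρ'pd (EntProd.posDef_kron hSpd hEpd) hρ'tr
      (by rw [Matrix.trace_kronecker, hStr, hEtr, one_mul])
  have hK2 : 0 ≤ ((ptrS ρ' * matLog (ptrS ρ') - ptrS ρ' * matLog ρE).trace).re :=
    EntProd.klein hEpd hρE hEtr hρEtr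
  rw [Matrix.trace_sub, Complex.sub_re] at hK1 hK2
  have hE1re := congrArg Complex.re hE1
  rw [Complex.add_re, Complex.add_re] at hE1re
  have hDre := congrArg Complex.re hD
  rw [Complex.add_re] at hDre
  have hCre := congrArg Complex.re hC
  rw [Complex.add_re] at hCre
  rw [hCre] at hK1
  constructor
  · unfold vnEntropy relEnt
    rw [Matrix.sub_mul, Matrix.trace_sub, Matrix.trace_sub, Matrix.trace_sub]
    simp only [Complex.sub_re, Complex.neg_re]
    linarith [hE1re]
  · unfold relEnt
    rw [Matrix.trace_sub, Matrix.trace_sub]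
    simp only [Complex.sub_re]
    linarith [hK1, hK2, hE1re, hDre]

end
end

section
/- Under detailed balance (W_{ij} p*_j = W_{ji} p*_i for a stationary distribution p*), the Schnakenberg entropy production rate equals minus the time derivative of the Kullback–Leibler divergence: Σ̇ = −d/dt S(p(t) ‖ p*), where S(p‖q) = ∑_i p_i log(p_i/q_i). -/
open BigOperators

/-- Under detailed balance `W i j * q j = W j i * q i` with respect to
a stationary distribution `q`, the Schnakenberg entropy production rate equals minus the
time derivative of the Kullback–Leibler divergence `S(p(t)‖q) = ∑ p_i log(p_i/q_i)`. -/
theorem schnakenberg_detailed_balance_KL {ι : Type*} [Fintype ι]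
    (W : ι → ι → ℝ) (q : ι → ℝ) (p : ℝ → ι → ℝ) (t₀ : ℝ)
    (hW : ∀ i j, 0 ≤ W i j)
    (hq : ∀ i, 0 < q i) (hqsum : ∑ i, q i = 1)
    (hdb : ∀ i j, W i j * q j = W j i * q i)
    (hp : ∀ i, 0 < p t₀ i) (hpsum : ∀ t, ∑ i, p t i = 1)
    (hode : ∀ i, HasDerivAt (fun t => p t i)
      (∑ j, (W i j * p t₀ j - W j i * p t₀ i)) t₀) :
    HasDerivAt (fun t => ∑ i, p t i * Real.log (p t i / q i))
      (-((1/2) * ∑ i, ∑ j, (W i j * p t₀ j - W j i * p t₀ i) *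
          Real.log ((W i j * p t₀ j) / (W j i * p t₀ i)))) t₀ := by
  classical
  set A : ι → ι → ℝ := fun i j => W i j * p t₀ j - W j i * p t₀ i with hA
  set v : ι → ℝ := fun i => ∑ j, A i j with hv
  -- Step 1: derivative of the KL divergence
  have hderiv : HasDerivAt (fun t => ∑ i, p t i * Real.log (p t i / q i))
      (∑ i, (v i * Real.log (p t₀ i / q i) + v i)) t₀ := by
    apply HasDerivAt.fun_sum
    intro i _
    have hpi := hp i
    have h1 : HasDerivAt (fun t => p t i * (Real.log (p t i) - Real.log (q i)))
        (v i * (Real.log (p t₀ i) - Real.log (q i)) + p t₀ i * (v i / p t₀ i)) t₀ :=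
      (hode i).mul (((hode i).log hpi.ne').sub_const _)
    have hev : ∀ᶠ t in nhds t₀, 0 < p t i :=
      (hode i).continuousAt.eventually (eventually_gt_nhds hpi)
    have heq : (fun t => p t i * Real.log (p t i / q i)) =ᶠ[nhds t₀]
        (fun t => p t i * (Real.log (p t i) - Real.log (q i))) := by
      filter_upwards [hev] with t ht
      rw [Real.log_div ht.ne' (hq i).ne']
    have h2 := h1.congr_of_eventuallyEq heq
    convert h2 using 1
    rw [Real.log_div hpi.ne' (hq i).ne']
    field_simp
  -- Step 2: algebraic identity
  have hAanti : ∀ i j, A j i = -A i j := by intro i j; simp only [hA]; ring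
  have hWpos : ∀ i j, W i j ≠ 0 → 0 < W j i := by
    intro i j h
    have h1 : 0 < W i j * q j := mul_pos ((hW i j).lt_of_ne (Ne.symm h)) (hq j)
    rw [hdb i j] at h1
    rcases (hW j i).lt_or_eq with h2 | h2
    · exact h2
    · exfalso; rw [← h2, zero_mul] at h1; exact lt_irrefl 0 h1
  have key : ∀ i j, A i j * Real.log ((W i j * p t₀ j) / (W j i * p t₀ i))
      = A i j * (Real.log (p t₀ j / q j) - Real.log (p t₀ i / q i)) := by
    intro i j
    by_cases h : W i j = 0
    · have h2 : W j i = 0 := by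
        have := hdb i j
        rw [h, zero_mul] at this
        exact (mul_eq_zero.mp this.symm).resolve_right (hq i).ne'
      simp [hA, h, h2]
    · have hij : 0 < W i j := (hW i j).lt_of_ne (Ne.symm h)
      have hji : 0 < W j i := hWpos i j h
      have hlogdb : Real.log (W i j) + Real.log (q j)
          = Real.log (W j i) + Real.log (q i) := by
        rw [← Real.log_mul hij.ne' (hq j).ne', ← Real.log_mul hji.ne' (hq i).ne', hdb]
      rw [Real.log_div (mul_pos hij (hp j)).ne' (mul_pos hji (hp i)).ne',
        Real.log_mul hij.ne' (hp j).ne', Real.log_mul hji.ne' (hp i).ne',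
        Real.log_div (hp j).ne' (hq j).ne', Real.log_div (hp i).ne' (hq i).ne']
      linear_combination (W i j * p t₀ j - W j i * p t₀ i) * hlogdb
  have hsum1 : ∑ i, ∑ j, A i j * Real.log ((W i j * p t₀ j) / (W j i * p t₀ i))
      = ∑ i, ∑ j, A i j * (Real.log (p t₀ j / q j) - Real.log (p t₀ i / q i)) := by
    exact Finset.sum_congr rfl fun i _ => Finset.sum_congr rfl fun j _ => key i j
  set r : ι → ℝ := fun i => Real.log (p t₀ i / q i) with hr
  have hswap : ∑ i, ∑ j, A i j * r j = - ∑ i, ∑ j, A i j * r i := by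
    rw [Finset.sum_comm]
    rw [← Finset.sum_neg_distrib]
    refine Finset.sum_congr rfl fun i _ => ?_
    rw [← Finset.sum_neg_distrib]
    refine Finset.sum_congr rfl fun j _ => ?_
    rw [hAanti]; ring
  have hvsum : ∑ i, v i = 0 := by
    have h0 : ∑ i, ∑ j, A i j = ∑ i, ∑ j, A j i := Finset.sum_comm
    have h2 : ∑ i, ∑ j, A j i = - ∑ i, ∑ j, A i j := by
      rw [← Finset.sum_neg_distrib]
      refine Finset.sum_congr rfl fun i _ => ?_
      rw [← Finset.sum_neg_distrib]
      exact Finset.sum_congr rfl fun j _ => hAanti i j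
    simp only [hv]
    linarith [h0, h2]
  have hfinal : -((1/2) * ∑ i, ∑ j, A i j * Real.log ((W i j * p t₀ j) / (W j i * p t₀ i)))
      = ∑ i, (v i * r i + v i) := by
    rw [hsum1]
    have expand : ∑ i, ∑ j, A i j * (r j - r i)
        = (∑ i, ∑ j, A i j * r j) - ∑ i, ∑ j, A i j * r i := by
      rw [← Finset.sum_sub_distrib]
      refine Finset.sum_congr rfl fun i _ => ?_
      rw [← Finset.sum_sub_distrib]
      refine Finset.sum_congr rfl fun j _ => ?_
      ring
    rw [expand, hswap]
    have h3 : ∑ i, (v i * r i + v i) = (∑ i, v i * r i) + ∑ i, v i := by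
      rw [Finset.sum_add_distrib]
    rw [h3, hvsum, add_zero]
    have h4 : ∑ i, v i * r i = ∑ i, ∑ j, A i j * r i := by
      refine Finset.sum_congr rfl fun i _ => ?_
      rw [hv, Finset.sum_mul]
    rw [h4]; ring
  rw [← hfinal] at hderiv
  exact hderiv
end

section
/- Cumulant generating function and Rényi divergence for a quantum quench: for the two-point-measurement entropy production σ of a sudden quench from Hamiltonian H_i to H_f with initial thermal state ρ_i = e^{−βH_i}/Z_i and trivial evolution (V = 1), the CGF K(λ) = log⟨e^{−λσ}⟩ equals (λ−1)·S_λ(ρ_f ‖ ρ_i), where ρ_f = e^{−βH_f}/Z_f and S_λ(ρ‖σ) = (λ−1)^{−1} log Tr(ρ^λ σ^{1−λ}). -/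
open Matrix BigOperators

noncomputable section

/-- Real power of a Hermitian matrix via the spectral decomposition (junk value `0`
otherwise). -/
def matRpow {n : Type*} [Fintype n] [DecidableEq n] (A : Matrix n n ℂ) (α : ℝ) :
    Matrix n n ℂ :=
  if h : A.IsHermitian then
    (h.eigenvectorUnitary : Matrix n n ℂ) *
      Matrix.diagonal (fun i => ((h.eigenvalues i ^ α : ℝ) : ℂ)) *
      (star (h.eigenvectorUnitary : Matrix n n ℂ))
  else 0

/-- Gibbs (thermal) state `e^{-βH}/Z`. -/
def gibbs {n : Type*} [Fintype n] [DecidableEq n] (β : ℝ) (H : Matrix n n ℂ) :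
    Matrix n n ℂ :=
  (NormedSpace.exp (-(β : ℂ) • H)).trace⁻¹ • NormedSpace.exp (-(β : ℂ) • H)

/-- Quantum Rényi divergence `S_λ(ρ‖σ) = (λ−1)⁻¹ log Tr(ρ^λ σ^{1−λ})`. -/
def qRenyiDiv {n : Type*} [Fintype n] [DecidableEq n]
    (lam : ℝ) (ρ σ : Matrix n n ℂ) : ℝ :=
  (lam - 1)⁻¹ * Real.log (((matRpow ρ lam * matRpow σ (1 - lam)).trace).re)

section Helpers

variable {n : Type*} [Fintype n] [DecidableEq n]

lemma contOn_finite {s : Set ℝ} (hs : s.Finite) (f : ℝ → ℝ) : ContinuousOn f s := by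
  rw [continuousOn_iff_continuous_restrict]
  have : Finite s := hs
  exact continuous_of_discreteTopology

lemma matCont (f : ℝ → ℝ) (A : Matrix n n ℂ) : ContinuousOn f (spectrum ℝ A) :=
  contOn_finite (Matrix.finite_real_spectrum (A := A)) f

lemma matCont' (f g : ℝ → ℝ) (A : Matrix n n ℂ) : ContinuousOn f (g '' spectrum ℝ A) :=
  contOn_finite ((Matrix.finite_real_spectrum (A := A)).image g) f

set_option maxHeartbeats 1000000 in
lemma exp_smul_eq_cfc {A : Matrix n n ℂ} (hA : A.IsHermitian) (c : ℝ) :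
    NormedSpace.exp ((c : ℂ) • A) = cfc (fun x => Real.exp (c * x)) A := by
  set V : Matrix n n ℂ := (hA.eigenvectorUnitary : Matrix n n ℂ) with hV
  have h1 : V * star V = 1 := Matrix.mem_unitaryGroup_iff.mp (hA.eigenvectorUnitary).2
  have h2 : star V * V = 1 := Matrix.mem_unitaryGroup_iff'.mp (hA.eigenvectorUnitary).2
  let U : (Matrix n n ℂ)ˣ := ⟨V, star V, h1, h2⟩
  set D : Matrix n n ℂ := Matrix.diagonal (RCLike.ofReal ∘ hA.eigenvalues) with hD
  have key : NormedSpace.exp (V * ((c:ℂ) • D) * star V)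
      = V * NormedSpace.exp ((c:ℂ) • D) * star V :=
    Matrix.exp_units_conj U ((c:ℂ) • D)
  have hsp : (c : ℂ) • A = V * ((c:ℂ) • D) * star V := by
    conv_lhs => rw [hA.spectral_theorem]
    rw [Unitary.conjStarAlgAut_apply, mul_smul_comm, smul_mul_assoc]
  rw [hsp, key, Matrix.IsHermitian.cfc_eq hA, Matrix.IsHermitian.cfc, Unitary.conjStarAlgAut_apply]
  congr 2
  rw [hD, ← Matrix.diagonal_smul, Matrix.exp_diagonal]
  rw [Pi.exp_def]
  refine congrArg Matrix.diagonal (funext fun i => ?_)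
  simp only [Pi.smul_apply, Function.comp_apply, smul_eq_mul]
  rw [← Complex.exp_eq_exp_ℂ]
  simp [RCLike.ofReal_alg]

lemma trace_cfc' {A : Matrix n n ℂ} (hA : A.IsHermitian) (f : ℝ → ℝ) :
    (cfc f A).trace = ∑ i, ((f (hA.eigenvalues i) : ℝ) : ℂ) := by
  rw [Matrix.IsHermitian.cfc_eq hA, Matrix.IsHermitian.cfc, Unitary.conjStarAlgAut_apply, Matrix.trace_mul_cycle]
  rw [Matrix.mem_unitaryGroup_iff'.mp (hA.eigenvectorUnitary).2, one_mul, Matrix.trace_diagonal]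
  rfl

lemma matRpow_eq {A : Matrix n n ℂ} (hA : A.IsHermitian) (α : ℝ) :
    matRpow A α = cfc (fun x : ℝ => x ^ α) A := by
  rw [matRpow, dif_pos hA, Matrix.IsHermitian.cfc_eq hA, Matrix.IsHermitian.cfc]
  rfl

lemma trace_exp_smul {H : Matrix n n ℂ} (hH : H.IsHermitian) (β : ℝ) :
    (NormedSpace.exp (-(β : ℂ) • H)).trace
      = ((∑ i, Real.exp (-β * hH.eigenvalues i) : ℝ) : ℂ) := by
  have h : (-(β:ℂ)) = ((-β : ℝ) : ℂ) := by push_cast; ring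
  rw [h, exp_smul_eq_cfc hH (-β), trace_cfc' hH]
  push_cast
  rfl

lemma gibbs_eq_cfc {H : Matrix n n ℂ} (hH : H.IsHermitian) (β : ℝ) :
    gibbs β H = cfc (fun x =>
      (∑ i, Real.exp (-β * hH.eigenvalues i))⁻¹ * Real.exp (-β * x)) H := by
  rw [gibbs, trace_exp_smul hH β]
  have h : (-(β:ℂ)) = ((-β : ℝ) : ℂ) := by push_cast; ring
  rw [h, exp_smul_eq_cfc hH (-β), cfc_const_mul _ _ _ (matCont _ _), ← Complex.ofReal_inv,
    ← Complex.coe_algebraMap, algebraMap_smul]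

lemma sub_smul_one_eq_cfc {A : Matrix n n ℂ} (hA : A.IsHermitian) (r : ℝ) :
    A - (r : ℂ) • 1 = cfc (fun x : ℝ => x - r) A := by
  rw [cfc_sub _ _ A (matCont _ _) (matCont _ _), cfc_id' ℝ A hA.isSelfAdjoint,
    cfc_const r A hA.isSelfAdjoint]
  congr 1
  rw [Algebra.algebraMap_eq_smul_one, ← Complex.coe_algebraMap, algebraMap_smul]

omit [Fintype n] in
lemma smul_one_isHermitian (r : ℝ) : ((r : ℂ) • (1 : Matrix n n ℂ)).IsHermitian := by
  simp [Matrix.IsHermitian, Matrix.conjTranspose_smul]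

lemma key_f (Z β lam x F : ℝ) (hZ : 0 < Z) (hF : F = -β⁻¹ * Real.log Z) (hβ : β ≠ 0) :
    Real.exp (-(β * lam) * (x - F)) = (Z⁻¹ * Real.exp (-β * x)) ^ lam := by
  rw [Real.rpow_def_of_pos (by positivity), Real.log_mul (by positivity)
    (Real.exp_ne_zero _), Real.log_inv, Real.log_exp, hF]
  congr 1
  field_simp
  ring

lemma key_i (Z β lam x F : ℝ) (hZ : 0 < Z) (hF : F = -β⁻¹ * Real.log Z) (hβ : β ≠ 0) :
    Real.exp ((β * lam) * (x - F)) * (Z⁻¹ * Real.exp (-β * x))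
      = (Z⁻¹ * Real.exp (-β * x)) ^ (1 - lam) := by
  rw [Real.rpow_def_of_pos (by positivity), Real.log_mul (by positivity)
    (Real.exp_ne_zero _), Real.log_inv, Real.log_exp, hF]
  rw [show Z⁻¹ = Real.exp (-(Real.log Z)) by rw [Real.exp_neg, Real.exp_log hZ]]
  rw [← mul_assoc, ← Real.exp_add, ← Real.exp_add]
  congr 1
  field_simp
  ring

end Helpers

/-- **CGF of a sudden quench and Rényi divergence.** For a sudden quench
`H_i → H_f` (trivial evolution `V = 1`) starting from the thermal state
`ρ_i = e^{−βH_i}/Z_i`, the cumulant generating function of the two-point-measurement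
entropy production, `K(λ) = log Tr(e^{−βλ(H_f − F_f)} e^{βλ(H_i − F_i)} ρ_i)`, equals
`(λ−1)·S_λ(ρ_f‖ρ_i)` with `ρ_f = e^{−βH_f}/Z_f`. -/
theorem quench_CGF_eq_renyi
    {n : Type*} [Fintype n] [DecidableEq n]
    (Hi Hf : Matrix n n ℂ) (β lam : ℝ)
    (hHi : Hi.IsHermitian) (hHf : Hf.IsHermitian) (hβ : 0 < β)
    (Fi Ff : ℝ)
    (hFi : Fi = -β⁻¹ * Real.log (((NormedSpace.exp (-(β : ℂ) • Hi)).trace).re))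
    (hFf : Ff = -β⁻¹ * Real.log (((NormedSpace.exp (-(β : ℂ) • Hf)).trace).re)) :
    Real.log ((((NormedSpace.exp (-((β * lam : ℝ) : ℂ) • (Hf - (Ff : ℂ) • 1)))
        * (NormedSpace.exp (((β * lam : ℝ) : ℂ) • (Hi - (Fi : ℂ) • 1)))
        * gibbs β Hi).trace).re)
      = (lam - 1) * qRenyiDiv lam (gibbs β Hf) (gibbs β Hi) := by
  rcases isEmpty_or_nonempty n with hn | hn
  · have h0 : ∀ M : Matrix n n ℂ, M.trace = 0 := fun M => by simp [Matrix.trace]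
    rw [h0, qRenyiDiv, h0]
    simp
  -- notation
  set Zi : ℝ := ∑ i, Real.exp (-β * hHi.eigenvalues i) with hZi
  set Zf : ℝ := ∑ i, Real.exp (-β * hHf.eigenvalues i) with hZf
  have hZip : 0 < Zi := Finset.sum_pos (fun i _ => Real.exp_pos _) Finset.univ_nonempty
  have hZfp : 0 < Zf := Finset.sum_pos (fun i _ => Real.exp_pos _) Finset.univ_nonempty
  rw [trace_exp_smul hHi β, Complex.ofReal_re] at hFi
  rw [trace_exp_smul hHf β, Complex.ofReal_re] at hFf
  have hβ0 : β ≠ 0 := ne_of_gt hβ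
  -- the functions
  set gi : ℝ → ℝ := fun x => Zi⁻¹ * Real.exp (-β * x) with hgi
  set gf : ℝ → ℝ := fun x => Zf⁻¹ * Real.exp (-β * x) with hgf
  -- hermiticity of shifted Hamiltonians
  have hAf : (Hf - (Ff : ℂ) • 1).IsHermitian := hHf.sub (smul_one_isHermitian Ff)
  have hAi : (Hi - (Fi : ℂ) • 1).IsHermitian := hHi.sub (smul_one_isHermitian Fi)
  have hgfh : (cfc gf Hf).IsHermitian := (cfc_predicate gf Hf : IsSelfAdjoint _)
  have hgih : (cfc gi Hi).IsHermitian := (cfc_predicate gi Hi : IsSelfAdjoint _)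
  -- first exponential factor
  have hE1 : NormedSpace.exp (-((β * lam : ℝ) : ℂ) • (Hf - (Ff : ℂ) • 1))
      = cfc (fun x => Real.exp (-(β * lam) * (x - Ff))) Hf := by
    rw [← Complex.ofReal_neg, exp_smul_eq_cfc hAf (-(β * lam)), sub_smul_one_eq_cfc hHf Ff]
    exact (cfc_comp' (fun x => Real.exp (-(β * lam) * x)) (fun x => x - Ff) Hf
        (matCont' _ _ _) (matCont _ _) hHf.isSelfAdjoint).symm
  have hE2 : NormedSpace.exp (((β * lam : ℝ) : ℂ) • (Hi - (Fi : ℂ) • 1))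
      = cfc (fun x => Real.exp ((β * lam) * (x - Fi))) Hi := by
    rw [exp_smul_eq_cfc hAi (β * lam), sub_smul_one_eq_cfc hHi Fi]
    exact (cfc_comp' (fun x => Real.exp ((β * lam) * x)) (fun x => x - Fi) Hi
        (matCont' _ _ _) (matCont _ _) hHi.isSelfAdjoint).symm
  have hGi : gibbs β Hi = cfc gi Hi := gibbs_eq_cfc hHi β
  have hGf : gibbs β Hf = cfc gf Hf := gibbs_eq_cfc hHf β
  -- Rényi side matrices
  have hR1 : matRpow (gibbs β Hf) lam = cfc (fun x => gf x ^ lam) Hf := by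
    rw [hGf, matRpow_eq hgfh lam]
    exact (cfc_comp' (fun x : ℝ => x ^ lam) gf Hf (matCont' _ _ _) (matCont _ _)
      hHf.isSelfAdjoint).symm
  have hR2 : matRpow (gibbs β Hi) (1 - lam) = cfc (fun x => gi x ^ (1 - lam)) Hi := by
    rw [hGi, matRpow_eq hgih (1 - lam)]
    exact (cfc_comp' (fun x : ℝ => x ^ (1 - lam)) gi Hi (matCont' _ _ _) (matCont _ _)
      hHi.isSelfAdjoint).symm
  -- pointwise identities
  have hfun1 : (fun x => Real.exp (-(β * lam) * (x - Ff))) = fun x => gf x ^ lam :=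
    funext fun x => key_f Zf β lam x Ff hZfp hFf hβ0
  have hfun2 : (fun x => Real.exp ((β * lam) * (x - Fi)) * gi x)
      = fun x => gi x ^ (1 - lam) :=
    funext fun x => key_i Zi β lam x Fi hZip hFi hβ0
  -- matrix equality
  have hM : NormedSpace.exp (-((β * lam : ℝ) : ℂ) • (Hf - (Ff : ℂ) • 1))
        * NormedSpace.exp (((β * lam : ℝ) : ℂ) • (Hi - (Fi : ℂ) • 1))
        * gibbs β Hi
      = matRpow (gibbs β Hf) lam * matRpow (gibbs β Hi) (1 - lam) := by
    rw [hR1, hR2, hE1, hE2, hGi, mul_assoc,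
      ← cfc_mul (fun x => Real.exp ((β * lam) * (x - Fi))) gi Hi (matCont _ _) (matCont _ _),
      hfun1, hfun2]
  rw [hM, qRenyiDiv]
  by_cases hl : lam = 1
  · subst hl
    have h2 : matRpow (gibbs β Hi) (1 - 1) = 1 := by
      rw [hR2]
      have he : (fun x => gi x ^ ((1:ℝ) - 1)) = fun _ => 1 :=
        funext fun x => by rw [sub_self, Real.rpow_zero]
      rw [he]
      exact cfc_const_one ℝ Hi
    have hsum : ∑ i, gf (hHf.eigenvalues i) = 1 := by
      simp only [hgf]
      rw [← Finset.mul_sum, ← hZf, inv_mul_cancel₀ (ne_of_gt hZfp)]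
    have h1 : (matRpow (gibbs β Hf) 1).trace = 1 := by
      rw [hR1]
      have he : (fun x => gf x ^ (1:ℝ)) = gf := funext fun x => Real.rpow_one _
      rw [he, trace_cfc' hHf gf, ← Complex.ofReal_sum, hsum, Complex.ofReal_one]
    rw [h2, mul_one, h1]
    simp
  · rw [← mul_assoc, mul_inv_cancel₀ (sub_ne_zero.mpr hl), one_mul]

end
end
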